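/- arXiv:2410.18259 — 4 statements merged into one kernel-verified Lean document; each statement's English description precedes it below -/
import Mathlib

section
/- For every integer n ≥ 2 and every function f from the primes to the real numbers, Σ_{d | n, d > 1} μ(d) f(p(d)) = −f(P(n)), where the sum runs over all divisors d > 1 of n. -/
open Finset ArithmeticFunction

/-- The largest prime factor of `n` (junk value `0` for `n ≤ 1`). -/
def maxPrimeFac (n : ℕ) : ℕ := n.primeFactors.sup _root_.id

lemma minFac_prod_primes {T : Finset ℕ} (hT : T.Nonempty) (hp : ∀ p ∈ T, p.Prime) :
    (∏ p ∈ T, p).minFac = T.min' hT := by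
  set m := T.min' hT with hm
  have hmT : m ∈ T := T.min'_mem hT
  have hmp : m.Prime := hp m hmT
  have hmd : m ∣ ∏ p ∈ T, p := dvd_prod_of_mem _ hmT
  have hne1 : (∏ p ∈ T, p) ≠ 1 := by
    intro h
    rw [h] at hmd
    exact hmp.one_lt.ne' (Nat.eq_one_of_dvd_one hmd)
  have hmin : (∏ p ∈ T, p).minFac.Prime := Nat.minFac_prime hne1
  have hdvd := Nat.minFac_dvd (∏ p ∈ T, p)
  obtain ⟨q, hqT, hq⟩ := (hmin.prime.dvd_finset_prod_iff _).mp hdvd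
  have hq' : (∏ p ∈ T, p).minFac = q := (Nat.prime_dvd_prime_iff_eq hmin (hp q hqT)).mp hq
  refine le_antisymm (Nat.minFac_le_of_dvd hmp.two_le hmd) ?_
  rw [hq']
  exact T.min'_le _ hqT

lemma moebius_prod_primes {T : Finset ℕ} (hp : ∀ p ∈ T, p.Prime) :
    moebius (∏ p ∈ T, p) = (-1) ^ T.card := by
  rw [ArithmeticFunction.IsMultiplicative.map_prod _ isMultiplicative_moebius T ?_]
  · rw [Finset.prod_congr rfl fun p hpT => moebius_apply_prime (hp p hpT),
      Finset.prod_const]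
  · intro a ha b hb hab
    exact (Nat.coprime_primes (hp a ha) (hp b hb)).mpr hab

lemma key_sum (f : ℕ → ℝ) (s : Finset ℕ) (hp : ∀ p ∈ s, p.Prime) (hs : s.Nonempty) :
    ∑ T ∈ s.powerset,
      (if 1 < ∏ p ∈ T, p then ((-1 : ℝ)) ^ T.card * f ((∏ p ∈ T, p).minFac) else 0)
      = - f (s.max' hs) := by
  classical
  induction s using Finset.induction_on_min with
  | empty => exact absurd hs (by simp)
  | insert a s ha ih =>
    have haS : a ∉ s := fun h => lt_irrefl a (ha a h)
    have hap : a.Prime := hp a (mem_insert_self a s)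
    have hsp : ∀ p ∈ s, p.Prime := fun p h => hp p (mem_insert_of_mem h)
    rw [Finset.powerset_insert, Finset.sum_union, Finset.sum_image (fun x hx y hy h => by
      rw [Finset.mem_coe, Finset.mem_powerset] at hx hy
      have hax : a ∉ x := fun hc => haS (hx hc)
      have hay : a ∉ y := fun hc => haS (hy hc)
      have := congrArg (fun t : Finset ℕ => t.erase a) h
      simpa [Finset.erase_insert hax, Finset.erase_insert hay] using this)]
    · -- second sum: each term with a inserted
      have himg : ∀ T ∈ s.powerset,
          (if 1 < ∏ p ∈ insert a T, p then
            ((-1 : ℝ)) ^ (insert a T).card * f ((∏ p ∈ insert a T, p).minFac) else 0)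
          = (-1) ^ T.card * (- f a) := by
        intro T hT
        rw [Finset.mem_powerset] at hT
        have haT : a ∉ T := fun hc => haS (hT hc)
        have hTne : (insert a T).Nonempty := insert_nonempty a T
        have hTp : ∀ p ∈ insert a T, p.Prime := fun p hpT => by
          rcases Finset.mem_insert.mp hpT with h | h
          · exact h ▸ hap
          · exact hsp p (hT h)
        have hprod : 1 < ∏ p ∈ insert a T, p := by
          refine lt_of_lt_of_le hap.one_lt (Finset.single_le_prod' (f := fun p : ℕ => p) ?_ (mem_insert_self a T))
          intro i hi
          exact (hTp i hi).one_lt.le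
        have hminT : (insert a T).min' hTne = a := by
          refine le_antisymm (Finset.min'_le _ _ (mem_insert_self a T)) ?_
          have := Finset.min'_mem (insert a T) hTne
          rcases Finset.mem_insert.mp this with h | h
          · exact h.ge
          · exact (ha _ (hT h)).le
        rw [if_pos hprod, minFac_prod_primes hTne hTp, hminT, Finset.card_insert_of_notMem haT,
          pow_succ]
        ring
      have hcast : (∑ T ∈ s.powerset, ((-1 : ℝ)) ^ T.card)
          = (((∑ T ∈ s.powerset, ((-1 : ℤ)) ^ T.card) : ℤ) : ℝ) := by push_cast; rfl
      rw [Finset.sum_congr rfl himg, ← Finset.sum_mul, hcast,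
        Finset.sum_powerset_neg_one_pow_card]
      push_cast
      rcases s.eq_empty_or_nonempty with rfl | hsne
      · simp [Finset.max'_singleton]
      · rw [if_neg hsne.ne_empty, ih hsp hsne]
        rw [zero_mul, add_zero]
        congr 1
        have hmax : (insert a s).max' hs = s.max' hsne ⊔ a := (Finset.max'_insert a s hsne).trans (max_comm _ _)
        rw [hmax, sup_eq_left.mpr ((ha _ (s.max'_mem hsne)).le)]
    · -- disjointness
      rw [Finset.disjoint_left]
      intro T hT hT'
      rw [Finset.mem_powerset] at hT
      obtain ⟨U, hU, rfl⟩ := Finset.mem_image.mp hT'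
      exact haS (hT (mem_insert_self a U))

/-- Duality identity: for `n ≥ 2` and any real-valued function `f` on the primes,
`Σ_{d ∣ n, d > 1} μ(d) f(p(d)) = −f(P(n))`, where `p(d)` is the smallest prime factor
and `P(n)` the largest prime factor. -/
theorem duality_smallest_to_largest (n : ℕ) (hn : 2 ≤ n) (f : ℕ → ℝ) :
    ∑ d ∈ n.divisors.filter (fun d => 1 < d), (moebius d : ℝ) * f d.minFac
      = - f (maxPrimeFac n) := by
  classical
  have h0 : n ≠ 0 := by omega
  set g : ℕ → ℝ := fun d => if 1 < d then (moebius d : ℝ) * f d.minFac else 0 with hg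
  have step1 : ∑ d ∈ n.divisors.filter (fun d => 1 < d), (moebius d : ℝ) * f d.minFac
      = ∑ d ∈ n.divisors, g d := by
    rw [Finset.sum_filter]
  have step2 : ∑ d ∈ n.divisors, g d = ∑ d ∈ n.divisors.filter Squarefree, g d := by
    refine (Finset.sum_filter_of_ne ?_).symm
    intro d _ hd
    by_contra hsf
    apply hd
    simp [hg, moebius_eq_zero_of_not_squarefree hsf]
  rw [step1, step2, Nat.sum_divisors_filter_squarefree h0]
  have hpf : (UniqueFactorizationMonoid.normalizedFactors n).toFinset = n.primeFactors := by
    rw [Nat.factors_eq]; rfl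
  rw [hpf]
  have hterm : ∀ T ∈ n.primeFactors.powerset, g T.val.prod
      = (if 1 < ∏ p ∈ T, p then ((-1 : ℝ)) ^ T.card * f ((∏ p ∈ T, p).minFac) else 0) := by
    intro T hT
    rw [Finset.mem_powerset] at hT
    have hTp : ∀ p ∈ T, p.Prime := fun p h => Nat.prime_of_mem_primeFactors (hT h)
    have : T.val.prod = ∏ p ∈ T, p := by
      rw [Finset.prod_eq_multiset_prod, Multiset.map_id']
    rw [hg]
    simp only [this]
    split_ifs with h
    · rw [moebius_prod_primes hTp]
      push_cast
      ring
    · rfl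
  have hne : n.primeFactors.Nonempty := Nat.nonempty_primeFactors.mpr (by omega)
  rw [Finset.sum_congr rfl hterm, key_sum f n.primeFactors
    (fun p h => Nat.prime_of_mem_primeFactors h) hne]
  congr 1
  rw [maxPrimeFac, ← Finset.sup'_eq_sup hne _root_.id]
  rfl
end

section
/- For every integer n ≥ 2 and every function f from the primes to the real numbers, Σ_{d | n, d > 1} μ(d) f(P(d)) = −f(p(n)), where the sum runs over all divisors d > 1 of n. -/
open Finset ArithmeticFunction

/-- Key combinatorial identity: alternating sum over nonempty subsets, weighted by the
value of `f` at the maximum, telescopes to `-f (min)`. -/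
lemma aux_powerset_sum (f : ℕ → ℝ) (S : Finset ℕ) :
    ∀ hS : S.Nonempty,
      ∑ t ∈ S.powerset,
        (if t.Nonempty then (-1 : ℝ) ^ t.card * f (t.sup _root_.id) else 0)
        = - f (S.min' hS) := by
  classical
  induction S using Finset.induction_on_max with
  | empty => intro h; exact absurd rfl h.ne_empty
  | insert a s ha ih =>
    intro hS
    have ha' : a ∉ s := fun h => lt_irrefl a (ha a h)
    rw [Finset.sum_powerset_insert ha']
    have hins : ∀ t ∈ s.powerset,
        (if (insert a t).Nonempty then
            (-1 : ℝ) ^ (insert a t).card * f ((insert a t).sup _root_.id) else 0)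
          = (-1 : ℝ) ^ t.card * (- f a) := by
      intro t ht
      rw [Finset.mem_powerset] at ht
      have hat : a ∉ t := fun h => lt_irrefl a (ha a (ht h))
      have hsup : (insert a t).sup _root_.id = a := by
        rw [Finset.sup_insert]
        refine sup_eq_left.mpr (Finset.sup_le fun b hb => ?_)
        exact (ha b (ht hb)).le
      rw [if_pos (Finset.insert_nonempty a t), hsup, Finset.card_insert_of_notMem hat,
        pow_succ]
      ring
    rw [Finset.sum_congr rfl hins, ← Finset.sum_mul]
    have hcast : ∑ t ∈ s.powerset, (-1 : ℝ) ^ t.card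
        = ((if s = ∅ then 1 else 0 : ℤ) : ℝ) := by
      rw [← Finset.sum_powerset_neg_one_pow_card]
      push_cast
      rfl
    rcases s.eq_empty_or_nonempty with rfl | hs
    · simp
    · have hs' : s ≠ ∅ := hs.ne_empty
      rw [hcast, if_neg hs', ih hs]
      have hmin : (insert a s).min' hS = s.min' hs := by
        rw [Finset.min'_insert a s hs]
        exact min_eq_right ((ha _ (s.min'_mem hs)).le)
      simp [hmin]

lemma prod_primes_squarefree_moebius (t : Finset ℕ) (hp : ∀ p ∈ t, p.Prime) :
    Squarefree (∏ p ∈ t, p) ∧ (moebius (∏ p ∈ t, p) = (-1) ^ t.card) := by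
  classical
  induction t using Finset.induction_on with
  | empty => simp
  | @insert a s has ih =>
    have hap : a.Prime := hp a (Finset.mem_insert_self a s)
    have hsp : ∀ p ∈ s, p.Prime := fun p hps => hp p (Finset.mem_insert_of_mem hps)
    obtain ⟨hsq, hmu⟩ := ih hsp
    have hcop : Nat.Coprime a (∏ p ∈ s, p) := by
      apply Nat.Coprime.prod_right
      intro p hps
      exact (Nat.coprime_primes hap (hsp p hps)).mpr (fun h => has (h ▸ hps))
    rw [Finset.prod_insert has]
    constructor
    · exact (Nat.squarefree_mul hcop).mpr ⟨hap.squarefree, hsq⟩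
    · rw [isMultiplicative_moebius.map_mul_of_coprime hcop, hmu,
        moebius_apply_prime hap, Finset.card_insert_of_notMem has, pow_succ]
      ring

/-- Duality identity: for `n ≥ 2` and any real-valued function `f` on the primes,
`Σ_{d ∣ n, d > 1} μ(d) f(P(d)) = −f(p(n))`, where `p(n)` is the smallest prime factor
and `P(d)` the largest prime factor. -/
theorem duality_largest_to_smallest (n : ℕ) (hn : 2 ≤ n) (f : ℕ → ℝ) :
    ∑ d ∈ n.divisors.filter (fun d => 1 < d), (moebius d : ℝ) * f (maxPrimeFac d)
      = - f n.minFac := by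
  classical
  have hn0 : n ≠ 0 := by omega
  have hS : n.primeFactors.Nonempty := (Nat.nonempty_primeFactors).mpr hn
  set g : ℕ → ℝ := fun d => (moebius d : ℝ) * f (maxPrimeFac d) with hg
  -- step 1: the filtered index set is `divisors.erase 1`
  have h1 : n.divisors.filter (fun d => 1 < d) = n.divisors.erase 1 := by
    ext d
    simp only [Finset.mem_filter, Finset.mem_erase, Nat.mem_divisors]
    constructor
    · rintro ⟨⟨hd, _⟩, hlt⟩; exact ⟨by omega, hd, hn0⟩
    · rintro ⟨hne, hd, _⟩
      have : d ≠ 0 := fun h => by simp [h] at hd; omega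
      exact ⟨⟨hd, hn0⟩, by omega⟩
  have h1mem : (1 : ℕ) ∈ n.divisors := Nat.one_mem_divisors.mpr hn0
  have hg1 : g 1 = f 0 := by
    simp [hg, maxPrimeFac]
  -- step 2: drop non-squarefree divisors
  have h2 : ∑ d ∈ n.divisors, g d = ∑ d ∈ n.divisors.filter Squarefree, g d := by
    refine (Finset.sum_filter_of_ne fun d _ hne => ?_).symm
    by_contra hd
    have : moebius d = 0 := moebius_eq_zero_of_not_squarefree hd
    simp [hg, this] at hne
  -- step 3: via the powerset of prime factors
  have h3 : ∑ d ∈ n.divisors.filter Squarefree, g d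
      = ∑ t ∈ n.primeFactors.powerset, (-1 : ℝ) ^ t.card * f (t.sup _root_.id) := by
    rw [Nat.sum_divisors_filter_squarefree hn0, Nat.factors_eq]
    have hfin : ((n.primeFactorsList : Multiset ℕ)).toFinset = n.primeFactors := by
      simp
    rw [hfin]
    refine Finset.sum_congr rfl fun t ht => ?_
    rw [Finset.mem_powerset] at ht
    have hp : ∀ p ∈ t, p.Prime := fun p hpt => Nat.prime_of_mem_primeFactors (ht hpt)
    obtain ⟨hsq, hmu⟩ := prod_primes_squarefree_moebius t hp
    have hprod : t.val.prod = ∏ p ∈ t, p := by rw [Finset.prod_val]; rfl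
    have hmax : maxPrimeFac (∏ p ∈ t, p) = t.sup _root_.id := by
      rw [maxPrimeFac, Nat.primeFactors_prod hp]
    rw [hprod, hg]
    simp only [hmu, hmax]
    push_cast
    ring
  -- step 4: split off the empty set and use the key lemma
  have h4 : ∑ t ∈ n.primeFactors.powerset, (-1 : ℝ) ^ t.card * f (t.sup _root_.id)
      = - f (n.primeFactors.min' hS) + f 0 := by
    have hsplit : ∀ t ∈ n.primeFactors.powerset,
        (-1 : ℝ) ^ t.card * f (t.sup _root_.id)
          = (if t.Nonempty then (-1 : ℝ) ^ t.card * f (t.sup _root_.id) else 0)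
            + (if t = ∅ then f 0 else 0) := by
      intro t _
      rcases t.eq_empty_or_nonempty with rfl | ht
      · simp
      · rw [if_pos ht, if_neg ht.ne_empty, add_zero]
    rw [Finset.sum_congr rfl hsplit, Finset.sum_add_distrib,
      aux_powerset_sum f n.primeFactors hS]
    congr 1
    rw [Finset.sum_ite_eq' n.primeFactors.powerset ∅ (fun _ => f 0)]
    simp
  -- step 5: the min of the prime factors is the least prime factor
  have h5 : n.primeFactors.min' hS = n.minFac := by
    have hmem : n.minFac ∈ n.primeFactors :=
      Nat.mem_primeFactors.mpr ⟨Nat.minFac_prime (by omega), Nat.minFac_dvd n, hn0⟩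
    refine le_antisymm (Finset.min'_le _ _ hmem) (Finset.le_min' _ _ _ fun p hp => ?_)
    rw [Nat.mem_primeFactors] at hp
    exact Nat.minFac_le_of_dvd hp.1.two_le hp.2.1
  calc ∑ d ∈ n.divisors.filter (fun d => 1 < d), g d
      = ∑ d ∈ n.divisors.erase 1, g d := by rw [h1]
    _ = (∑ d ∈ n.divisors, g d) - g 1 := Finset.sum_erase_eq_sub h1mem
    _ = (- f (n.primeFactors.min' hS) + f 0) - f 0 := by rw [h2, h3, h4, hg1]
    _ = - f n.minFac := by rw [h5]; ring
end

section
/- For every integer n ≥ 2 and every function f from the primes to the real numbers, Σ_{d | n, d > 1} μ(d)(ω(d) − 1) f(p(d)) equals f(P₂(n)) if n has at least two distinct prime factors, and equals 0 if n has exactly one distinct prime factor; here the sum runs over all divisors d > 1 of n. -/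
open Finset ArithmeticFunction

/-- The second largest distinct prime factor of `n`: the largest prime factor of `n`
strictly less than `P(n)`, defined when `ω(n) ≥ 2`; junk value `1` otherwise. -/
def secondLargestPrimeFac (n : ℕ) : ℕ :=
  ((n.primeFactors.sort (· ≤ ·)).reverse).getD 1 1

private def secondOf (A : Finset ℕ) : ℕ := ((A.sort (· ≤ ·)).reverse).getD 1 1

private lemma negsum (A : Finset ℕ) :
    ∑ T ∈ A.powerset, (-1 : ℝ) ^ T.card = if A = ∅ then 1 else 0 := by
  classical
  have h := congrArg (fun z : ℤ => (z : ℝ)) (Finset.sum_powerset_neg_one_pow_card (x := A))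
  push_cast at h
  split_ifs at h ⊢ with h' <;> simpa using h

private lemma altsum (A : Finset ℕ) :
    ∑ T ∈ A.powerset, (-1 : ℝ) ^ T.card * T.card = if A.card = 1 then -1 else 0 := by
  classical
  induction A using Finset.induction_on with
  | empty => simp
  | insert _ _ ha ih =>
    rename_i a A
    rw [Finset.sum_powerset_insert ha]
    have h2 : ∑ T ∈ A.powerset, (-1 : ℝ) ^ (insert a T).card * (insert a T).card
        = ∑ T ∈ A.powerset, (-((-1 : ℝ) ^ T.card * T.card) - (-1 : ℝ) ^ T.card) := by
      refine Finset.sum_congr rfl fun T hT => ?_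
      have haT : a ∉ T := fun h => ha (Finset.mem_powerset.mp hT h)
      rw [Finset.card_insert_of_notMem haT]
      push_cast
      ring
    rw [h2, Finset.sum_sub_distrib, Finset.sum_neg_distrib, ih, negsum,
      Finset.card_insert_of_notMem ha]
    rcases Finset.eq_empty_or_nonempty A with h | h
    · subst h; simp
    · have h0 : A ≠ ∅ := Finset.nonempty_iff_ne_empty.mp h
      have h1 : A.card ≠ 0 := fun hc => h0 (Finset.card_eq_zero.mp hc)
      have h3 : A.card + 1 ≠ 1 := by omega
      split_ifs with hc <;> simp [h0, h3, hc]

private lemma minFac_prod_insert {a : ℕ} {T : Finset ℕ} (haP : a.Prime)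
    (hTP : ∀ p ∈ T, p.Prime) (hlt : ∀ q ∈ T, a < q) :
    (∏ p ∈ insert a T, p).minFac = a := by
  classical
  have haT : a ∉ T := fun h => lt_irrefl a (hlt a h)
  have hprime : ∀ p ∈ insert a T, p.Prime := by
    intro p hp
    rcases Finset.mem_insert.mp hp with rfl | hp
    · exact haP
    · exact hTP p hp
  set m := ∏ p ∈ insert a T, p with hm
  have hpf : m.primeFactors = insert a T := Nat.primeFactors_prod hprime
  have hadvd : a ∣ m := Finset.dvd_prod_of_mem _ (Finset.mem_insert_self a T)
  have hm1 : m ≠ 1 := by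
    intro h
    exact haP.one_lt.ne' (Nat.dvd_one.mp (h ▸ hadvd))
  have hle : m.minFac ≤ a := Nat.minFac_le_of_dvd haP.two_le hadvd
  have hm0 : m ≠ 0 := by
    intro h
    rw [h] at hpf
    simp at hpf
    exact (Finset.insert_ne_empty a T) hpf.symm
  have hmem : m.minFac ∈ insert a T := by
    rw [← hpf]
    exact Nat.mem_primeFactors.mpr ⟨Nat.minFac_prime hm1, Nat.minFac_dvd m, hm0⟩
  rcases Finset.mem_insert.mp hmem with h | h
  · exact h
  · exact absurd hle (not_le.mpr (hlt _ h))

private lemma secondOf_insert_pair {a b : ℕ} (hab : a < b) :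
    secondOf (insert a {b}) = a := by
  classical
  have hab' : a ∉ ({b} : Finset ℕ) := by simp [hab.ne]
  have : Finset.sort (insert a {b}) (· ≤ ·) = a :: Finset.sort {b} (· ≤ ·) :=
    Finset.sort_insert _ (by simpa using hab.le) hab'
  simp [secondOf, this, Finset.sort_singleton, List.getD]

private lemma secondOf_insert_of_two_le {a : ℕ} {A : Finset ℕ} (h2 : 2 ≤ A.card)
    (hlt : ∀ x ∈ A, a < x) : secondOf (insert a A) = secondOf A := by
  classical
  have haA : a ∉ A := fun h => lt_irrefl a (hlt a h)
  have hs : Finset.sort (insert a A) (· ≤ ·) = a :: Finset.sort A (· ≤ ·) :=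
    Finset.sort_insert _ (fun b hb => (hlt b hb).le) haA
  have hlen : (Finset.sort A (· ≤ ·)).reverse.length = A.card := by
    simp [Finset.length_sort]
  rw [secondOf, hs, List.reverse_cons, List.getD_append _ _ _ _ (by omega)]
  rfl

private lemma sqf_mu_prod_primes : ∀ (T : Finset ℕ), (∀ p ∈ T, p.Prime) →
    Squarefree (∏ p ∈ T, p) ∧ moebius (∏ p ∈ T, p) = (-1) ^ T.card := by
  classical
  intro T
  induction T using Finset.induction_on with
  | empty => intro _; simpa using ⟨squarefree_one, by simp⟩
  | insert _ _ hb ihb =>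
    rename_i b B
    intro hTP
    have hbP : b.Prime := hTP b (Finset.mem_insert_self _ _)
    have hBP : ∀ p ∈ B, p.Prime := fun p hp => hTP p (Finset.mem_insert_of_mem hp)
    obtain ⟨hsqB, hmuB⟩ := ihb hBP
    have hcop : Nat.Coprime b (∏ p ∈ B, p) := by
      rw [hbP.coprime_iff_not_dvd]
      intro hdvd
      obtain ⟨q, hq, hbq⟩ := (Nat.Prime.prime hbP).exists_mem_finset_dvd hdvd
      have : b = q := (((hBP q hq).dvd_iff_eq hbP.one_lt.ne').mp hbq).symm
      exact hb (this ▸ hq)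
    rw [Finset.prod_insert hb]
    constructor
    · exact (Nat.squarefree_mul hcop).mpr ⟨hbP.squarefree, hsqB⟩
    · rw [ArithmeticFunction.isMultiplicative_moebius.map_mul_of_coprime hcop,
        ArithmeticFunction.moebius_apply_prime hbP, hmuB,
        Finset.card_insert_of_notMem hb]
      ring

private lemma keyB (f : ℕ → ℝ) : ∀ (A : Finset ℕ), (∀ p ∈ A, p.Prime) →
    ∑ T ∈ A.powerset, (-1 : ℝ) ^ T.card * ((T.card : ℝ) - 1) * f ((∏ p ∈ T, p).minFac)
      = (if 2 ≤ A.card then f (secondOf A) else 0) - f 1 := by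
  classical
  intro A
  induction A using Finset.induction_on_min with
  | empty => intro _; simp [Nat.minFac_one]
  | insert a A hlt ih =>
    intro hprime
    have ha : a ∉ A := fun h => lt_irrefl a (hlt a h)
    have haP : a.Prime := hprime a (Finset.mem_insert_self _ _)
    have hAP : ∀ p ∈ A, p.Prime := fun p hp => hprime p (Finset.mem_insert_of_mem hp)
    rw [Finset.sum_powerset_insert ha]
    have h2 : ∑ T ∈ A.powerset,
        (-1 : ℝ) ^ (insert a T).card * (((insert a T).card : ℝ) - 1) *
          f ((∏ p ∈ insert a T, p).minFac)
        = ∑ T ∈ A.powerset, (-((-1 : ℝ) ^ T.card * T.card)) * f a := by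
      refine Finset.sum_congr rfl fun T hT => ?_
      have hTA := Finset.mem_powerset.mp hT
      have haT : a ∉ T := fun h => ha (hTA h)
      have hmin : (∏ p ∈ insert a T, p).minFac = a :=
        minFac_prod_insert haP (fun p hp => hAP p (hTA hp)) (fun q hq => hlt q (hTA hq))
      rw [Finset.card_insert_of_notMem haT, hmin]
      push_cast
      ring
    rw [h2, ih hAP, ← Finset.sum_mul, Finset.sum_neg_distrib, ← Finset.sum_neg_distrib]
    rw [show ∑ T ∈ A.powerset, -((-1 : ℝ) ^ T.card * T.card)
        = -∑ T ∈ A.powerset, (-1 : ℝ) ^ T.card * T.card by rw [Finset.sum_neg_distrib],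
      altsum]
    rw [Finset.card_insert_of_notMem ha]
    rcases Nat.lt_or_ge A.card 2 with hc | hc
    · interval_cases h : A.card
      · have hA : A = ∅ := Finset.card_eq_zero.mp h
        subst hA
        simp
      · obtain ⟨b, hb⟩ := Finset.card_eq_one.mp h
        subst hb
        have hab : a < b := hlt b (Finset.mem_singleton_self b)
        rw [secondOf_insert_pair hab]
        norm_num [h]
        ring
    · have h1 : A.card ≠ 1 := by omega
      have h2' : 2 ≤ A.card + 1 := by omega
      rw [secondOf_insert_of_two_le hc hlt]
      simp [h1, hc, h2']

/-- Second-order duality: for `n ≥ 2` and any real-valued function `f` on the primes,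
`Σ_{d ∣ n, d > 1} μ(d)(ω(d) − 1) f(p(d))` equals `f(P₂(n))` if `ω(n) ≥ 2`, and `0`
if `n` has exactly one distinct prime factor. -/
theorem duality_second_largest (n : ℕ) (hn : 2 ≤ n) (f : ℕ → ℝ) :
    ∑ d ∈ n.divisors.filter (fun d => 1 < d),
        (moebius d : ℝ) * ((d.primeFactors.card : ℝ) - 1) * f d.minFac
      = if 2 ≤ n.primeFactors.card then f (secondLargestPrimeFac n) else 0 := by
  classical
  have hn0 : n ≠ 0 := by omega
  set g : ℕ → ℝ := fun d => (moebius d : ℝ) * ((d.primeFactors.card : ℝ) - 1) * f d.minFac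
    with hg
  -- sum over d > 1 equals sum over squarefree divisors plus f 1
  have step1 : ∑ d ∈ n.divisors.filter (fun d => 1 < d), g d
      = (∑ d ∈ n.divisors.filter Squarefree, g d) + f 1 := by
    have hA : ∑ d ∈ n.divisors, g d
        = ∑ d ∈ n.divisors.filter (fun d => 1 < d), g d + g 1 := by
      rw [← Finset.sum_filter_add_sum_filter_not n.divisors (fun d => 1 < d)]
      congr 1
      have : n.divisors.filter (fun d => ¬ 1 < d) = {1} := by
        ext d
        simp only [Finset.mem_filter, Nat.mem_divisors, Finset.mem_singleton, not_lt]
        constructor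
        · rintro ⟨⟨hd, _⟩, hle⟩
          have : d ≠ 0 := fun h => hn0 (by simpa [h] using hd)
          omega
        · rintro rfl
          exact ⟨⟨one_dvd n, hn0⟩, le_refl 1⟩
      rw [this, Finset.sum_singleton]
    have hB : ∑ d ∈ n.divisors, g d = ∑ d ∈ n.divisors.filter Squarefree, g d := by
      rw [← Finset.sum_filter_add_sum_filter_not n.divisors Squarefree]
      have : ∑ d ∈ n.divisors.filter (fun d => ¬ Squarefree d), g d = 0 := by
        refine Finset.sum_eq_zero fun d hd => ?_
        have hns : ¬ Squarefree d := (Finset.mem_filter.mp hd).2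
        have : moebius d = 0 := by
          rw [ArithmeticFunction.moebius_eq_zero_of_not_squarefree hns]
        simp [hg, this]
      rw [this, add_zero]
    have hg1 : g 1 = -f 1 := by simp [hg, Nat.minFac_one]
    rw [hB] at hA
    rw [hA, hg1]
    ring
  rw [step1]
  -- rewrite squarefree sum as a powerset sum
  have step2 : ∑ d ∈ n.divisors.filter Squarefree, g d
      = ∑ T ∈ n.primeFactors.powerset, g (∏ p ∈ T, p) := by
    rw [Nat.sum_divisors_filter_squarefree hn0]
    have hps : (UniqueFactorizationMonoid.normalizedFactors n).toFinset = n.primeFactors := by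
      rw [Nat.factors_eq]
      simp
    rw [hps]
    refine Finset.sum_congr rfl fun T _ => ?_
    congr 1
    rw [Finset.prod_val T]
    simp
  rw [step2]
  -- rewrite each term
  have step3 : ∑ T ∈ n.primeFactors.powerset, g (∏ p ∈ T, p)
      = ∑ T ∈ n.primeFactors.powerset,
          (-1 : ℝ) ^ T.card * ((T.card : ℝ) - 1) * f ((∏ p ∈ T, p).minFac) := by
    refine Finset.sum_congr rfl fun T hT => ?_
    have hTP : ∀ p ∈ T, p.Prime := fun p hp =>
      Nat.prime_of_mem_primeFactors (Finset.mem_powerset.mp hT hp)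
    obtain ⟨hsq, hmu⟩ := sqf_mu_prod_primes T hTP
    have hpf : (∏ p ∈ T, p).primeFactors = T := Nat.primeFactors_prod hTP
    simp only [hg, hmu, hpf]
    push_cast
    ring
  rw [step3, keyB f n.primeFactors (fun p hp => Nat.prime_of_mem_primeFactors hp)]
  have : secondOf n.primeFactors = secondLargestPrimeFac n := rfl
  rw [this]
  ring
end

section
/- There exists a constant C > 0 such that uniformly for all real x and T with 2 ≤ T ≤ x, the number of positive integers n ≤ x with P₂(n) ≤ T is at most C · x · log T / log x. -/
open Finset Real

/-- Chebyshev-type bound: sum of logs of primes up to n. -/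
lemma theta_le (n : ℕ) : ∑ p ∈ (n+1).primesBelow, Real.log p ≤ n * Real.log 4 := by
  have h1 : ∑ p ∈ (n+1).primesBelow, Real.log p = Real.log (primorial n) := by
    rw [primorial, Nat.cast_prod, Real.log_prod]
    · rfl
    · intro p hp
      have := (Nat.prime_of_mem_primesBelow hp).pos
      positivity
  rw [h1]
  calc Real.log (primorial n) ≤ Real.log ((4:ℕ) ^ n) := by
        apply Real.log_le_log (by exact_mod_cast (primorial_pos n))
        exact_mod_cast primorial_le_4_pow n
    _ = n * Real.log 4 := by push_cast [Real.log_pow]; norm_num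

lemma log_eq_sum_factorization {k : ℕ} (hk : k ≠ 0) :
    Real.log k = ∑ p ∈ k.primeFactors, (k.factorization p : ℝ) * Real.log p := by
  conv_lhs => rw [← Nat.factorization_prod_pow_eq_self hk]
  rw [Finsupp.prod, Nat.support_factorization]
  push_cast
  rw [Real.log_prod]
  · exact Finset.sum_congr rfl fun p hp => by rw [Real.log_pow]
  · intro p hp
    have := (Nat.prime_of_mem_primeFactors hp).pos
    positivity

lemma pow_self_le (N : ℕ) : (N:ℝ)^N ≤ Real.exp N * (Nat.factorial N) := by
  induction N with
  | zero => simp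
  | succ n ih =>
    rcases Nat.eq_zero_or_pos n with rfl | hn
    · simpa using Real.one_le_exp (by norm_num)
    have hn' : (0:ℝ) < n := by exact_mod_cast hn
    have key : ((n:ℝ)+1)^n ≤ Real.exp 1 * (n:ℝ)^n := by
      have h1 : ((n:ℝ)+1) = (1 + 1/n) * n := by field_simp
      have h2 : ((1:ℝ) + 1/n) ^ n ≤ Real.exp 1 := by
        calc ((1:ℝ) + 1/n) ^ n ≤ (Real.exp (1/n)) ^ n := by
              apply pow_le_pow_left₀ (by positivity)
              linarith [Real.add_one_le_exp (1/(n:ℝ))]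
          _ = Real.exp ((n:ℝ) * (1/n)) := (Real.exp_nat_mul _ _).symm
          _ = Real.exp 1 := by rw [mul_one_div_cancel (ne_of_gt hn')]
      calc ((n:ℝ)+1)^n = ((1 + 1/n) * n)^n := by rw [← h1]
        _ = (1 + 1/n)^n * (n:ℝ)^n := mul_pow _ _ _
        _ ≤ Real.exp 1 * (n:ℝ)^n := by
            apply mul_le_mul_of_nonneg_right h2 (by positivity)
    have hfs : (Nat.factorial (n+1) : ℝ) = ((n:ℝ)+1) * Nat.factorial n := by
      rw [Nat.factorial_succ]; push_cast; ring
    have hes : Real.exp ((n+1:ℕ):ℝ) = Real.exp 1 * Real.exp n := by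
      push_cast; rw [← Real.exp_add]; ring_nf
    have : ((n+1:ℕ):ℝ)^(n+1) = ((n:ℝ)+1) * ((n:ℝ)+1)^n := by push_cast; ring
    rw [this, hes, hfs]
    calc ((n:ℝ)+1) * ((n:ℝ)+1)^n ≤ ((n:ℝ)+1) * (Real.exp 1 * (n:ℝ)^n) :=
          mul_le_mul_of_nonneg_left key (by positivity)
      _ ≤ ((n:ℝ)+1) * (Real.exp 1 * (Real.exp n * (Nat.factorial n))) := by
          have := mul_le_mul_of_nonneg_left ih (le_of_lt (Real.exp_pos 1))
          apply mul_le_mul_of_nonneg_left this (by positivity)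
      _ = Real.exp 1 * Real.exp n * (((n:ℝ)+1) * Nat.factorial n) := by ring

lemma log_factorial_ge {N : ℕ} (hN : 1 ≤ N) :
    (N:ℝ) * Real.log N - N ≤ Real.log (Nat.factorial N) := by
  have h0 : (0:ℝ) < N := by exact_mod_cast hN
  have h1 : Real.log ((N:ℝ)^N) ≤ Real.log (Real.exp N * (Nat.factorial N)) := by
    apply Real.log_le_log (by positivity) (pow_self_le N)
  rw [Real.log_pow, Real.log_mul (Real.exp_ne_zero _)
    (by exact_mod_cast (Nat.factorial_pos N).ne'), Real.log_exp] at h1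
  linarith

lemma log_factorial_le {N : ℕ} : Real.log (Nat.factorial N) ≤ N * Real.log N := by
  calc Real.log (Nat.factorial N) ≤ Real.log ((N:ℝ)^N) := by
        apply Real.log_le_log (by exact_mod_cast Nat.factorial_pos N)
        exact_mod_cast Nat.factorial_le_pow N
    _ = N * Real.log N := Real.log_pow _ _

/-- Mertens' first theorem, upper bound. -/
lemma mertens_first {n : ℕ} (hn : 1 ≤ n) :
    ∑ p ∈ (n+1).primesBelow, Real.log p / p ≤ Real.log n + 2 := by
  have hn0 : (0:ℝ) < n := by exact_mod_cast hn
  have key : ∑ p ∈ (n+1).primesBelow, ((n / p : ℕ) : ℝ) * Real.log p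
      ≤ Real.log (Nat.factorial n) := by
    rw [log_eq_sum_factorization (Nat.factorial_pos n).ne']
    have hsub : (n+1).primesBelow ⊆ (Nat.factorial n).primeFactors := by
      intro p hp
      obtain ⟨hlt, hp'⟩ := Nat.mem_primesBelow.mp hp
      exact Nat.mem_primeFactors.mpr ⟨hp', Nat.dvd_factorial hp'.pos (by omega),
        (Nat.factorial_pos n).ne'⟩
    calc ∑ p ∈ (n+1).primesBelow, ((n / p : ℕ) : ℝ) * Real.log p
        ≤ ∑ p ∈ (n+1).primesBelow, ((Nat.factorial n).factorization p : ℝ) * Real.log p := by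
          apply Finset.sum_le_sum
          intro p hp
          obtain ⟨hlt, hp'⟩ := Nat.mem_primesBelow.mp hp
          have hple : p ≤ n := by omega
          have hfac : (n / p : ℕ) ≤ (Nat.factorial n).factorization p := by
            rw [← Nat.Prime.pow_dvd_iff_le_factorization hp' (Nat.factorial_pos n).ne']
            rw [Nat.Prime.pow_dvd_factorial_iff hp' (Nat.lt_succ_self _)]
            have h1m : 1 ∈ Finset.Ico 1 (Nat.log p n).succ := by
              rw [Finset.mem_Ico]
              refine ⟨le_refl 1, ?_⟩
              have := Nat.log_pos hp'.one_lt hple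
              omega
            have := Finset.single_le_sum (f := fun i => n / p ^ i)
              (fun i _ => Nat.zero_le _) h1m
            simpa using this
          have hlg : (0:ℝ) ≤ Real.log p := Real.log_natCast_nonneg p
          exact mul_le_mul_of_nonneg_right (by exact_mod_cast hfac) hlg
      _ ≤ ∑ p ∈ (Nat.factorial n).primeFactors, ((Nat.factorial n).factorization p : ℝ) * Real.log p := by
          apply Finset.sum_le_sum_of_subset_of_nonneg hsub
          intro p hp _
          have hlg : (0:ℝ) ≤ Real.log p := Real.log_natCast_nonneg p
          positivity
  have step : (n:ℝ) * ∑ p ∈ (n+1).primesBelow, Real.log p / p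
      ≤ ∑ p ∈ (n+1).primesBelow, (((n / p : ℕ) : ℝ) + 1) * Real.log p := by
    rw [Finset.mul_sum]
    apply Finset.sum_le_sum
    intro p hp
    obtain ⟨hlt, hp'⟩ := Nat.mem_primesBelow.mp hp
    have hp0 : (0:ℝ) < p := by exact_mod_cast hp'.pos
    have hlog : (0:ℝ) ≤ Real.log p := Real.log_natCast_nonneg p
    have hmod : (n:ℕ) % p < p := Nat.mod_lt _ hp'.pos
    have hdm : (n:ℝ) = p * ((n/p : ℕ):ℝ) + ((n % p : ℕ):ℝ) := by
      exact_mod_cast (Nat.div_add_mod n p).symm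
    have hlt2 : (n:ℝ) < p * (((n/p : ℕ):ℝ) + 1) := by
      have : ((n % p : ℕ):ℝ) < p := by exact_mod_cast hmod
      nlinarith
    have hdiv : (n:ℝ) / p ≤ ((n/p : ℕ):ℝ) + 1 := by
      rw [div_le_iff₀ hp0]; nlinarith
    calc (n:ℝ) * (Real.log p / p) = (n/p) * Real.log p := by ring
      _ ≤ (((n / p : ℕ) : ℝ) + 1) * Real.log p := mul_le_mul_of_nonneg_right hdiv hlog
  have sum_split : ∑ p ∈ (n+1).primesBelow, (((n / p : ℕ) : ℝ) + 1) * Real.log p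
      = ∑ p ∈ (n+1).primesBelow, ((n / p : ℕ) : ℝ) * Real.log p
        + ∑ p ∈ (n+1).primesBelow, Real.log p := by
    rw [← Finset.sum_add_distrib]
    exact Finset.sum_congr rfl fun p _ => by ring
  have hlog4 : Real.log 4 ≤ 1.4 := by
    have h2 : Real.log 4 = 2 * Real.log 2 := by
      rw [show (4:ℝ) = 2^2 by norm_num, Real.log_pow]; norm_num
    nlinarith [Real.log_two_lt_d9]
  have htheta := theta_le n
  have hfl := log_factorial_le (N := n)
  have main : (n:ℝ) * ∑ p ∈ (n+1).primesBelow, Real.log p / p ≤ n * Real.log n + n * 2 := by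
    calc (n:ℝ) * ∑ p ∈ (n+1).primesBelow, Real.log p / p
        ≤ ∑ p ∈ (n+1).primesBelow, (((n / p : ℕ) : ℝ) + 1) * Real.log p := step
      _ = _ + _ := sum_split
      _ ≤ Real.log (Nat.factorial n) + n * Real.log 4 := by gcongr
      _ ≤ n * Real.log n + n * 2 := by nlinarith
  have main2 : (n:ℝ) * ∑ p ∈ (n+1).primesBelow, Real.log p / p ≤ (n:ℝ) * (Real.log n + 2) := by
    linarith
  exact le_of_mul_le_mul_left main2 hn0

lemma telescope_Ico (f : ℕ → ℝ) {a b : ℕ} (hab : a ≤ b) :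
    ∑ k ∈ Finset.Ico a b, (f k - f (k+1)) = f a - f b := by
  rw [Finset.sum_Ico_eq_sum_range]
  have h : ∀ i ∈ Finset.range (b - a), f (a + i) - f (a + i + 1)
      = (fun j => f (a + j)) i - (fun j => f (a + j)) (i+1) := by
    intro i _
    simp [Nat.add_assoc]
  rw [Finset.sum_congr rfl h, Finset.sum_range_sub' (fun j => f (a + j))]
  simp [Nat.add_sub_cancel' hab]

noncomputable def LL : ℕ → ℝ := fun k => Real.log (Real.log k)

lemma loglog_step {k : ℕ} (hk : 2 ≤ k) :
    1 - Real.log k / Real.log (k+1:ℕ) ≤ LL (k+1) - LL k := by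
  have hcast : ((k+1:ℕ):ℝ) = (k:ℝ)+1 := by push_cast; ring
  have ha : (0:ℝ) < Real.log k := by
    apply Real.log_pos; exact_mod_cast hk
  have hb : Real.log k ≤ Real.log (k+1:ℕ) := by
    apply Real.log_le_log (by positivity); rw [hcast]; linarith
  have hb0 : (0:ℝ) < Real.log (k+1:ℕ) := lt_of_lt_of_le ha hb
  have h1 : Real.log (Real.log k / Real.log (k+1:ℕ)) ≤ Real.log k / Real.log (k+1:ℕ) - 1 :=
    Real.log_le_sub_one_of_pos (by positivity)
  rw [Real.log_div (ne_of_gt ha) (ne_of_gt hb0)] at h1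
  simp only [LL]
  linarith

/-- Mertens' second theorem, upper bound. -/
lemma mertens_second {n : ℕ} (hn : 2 ≤ n) :
    ∑ p ∈ (n+1).primesBelow, (1:ℝ)/p ≤ Real.log (Real.log n) + 8 := by
  classical
  set g : ℕ → ℝ := fun k => 1 / Real.log k with hg
  have hlog2 : (0.6931:ℝ) < Real.log 2 := by
    have := Real.log_two_gt_d9; linarith
  have hglepos : ∀ k : ℕ, 2 ≤ k → 0 < Real.log k := by
    intro k hk; apply Real.log_pos; exact_mod_cast hk
  have hlogn : (0:ℝ) < Real.log n := hglepos n hn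
  have hdecomp : ∀ p ∈ (n+1).primesBelow,
      (1:ℝ)/p = Real.log p / p * g n + ∑ k ∈ Finset.Ico p n, (Real.log p / p) * (g k - g (k+1)) := by
    intro p hp
    obtain ⟨hlt, hp'⟩ := Nat.mem_primesBelow.mp hp
    have hp2 : 2 ≤ p := hp'.two_le
    have hppos : (0:ℝ) < p := by exact_mod_cast hp'.pos
    have hlp : (0:ℝ) < Real.log p := hglepos p hp2
    have htel : ∑ k ∈ Finset.Ico p n, (g k - g (k+1)) = g p - g n :=
      telescope_Ico g (by omega)
    rw [← Finset.mul_sum, htel, hg]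
    field_simp
    ring
  rw [Finset.sum_congr rfl hdecomp, Finset.sum_add_distrib, ← Finset.sum_mul]
  have hfirst : (∑ p ∈ (n+1).primesBelow, Real.log p / p) * g n ≤ 4 := by
    have h1 : (∑ p ∈ (n+1).primesBelow, Real.log p / p) ≤ Real.log n + 2 :=
      mertens_first (by omega)
    have h2 : 0 ≤ (∑ p ∈ (n+1).primesBelow, Real.log p / p) := by
      apply Finset.sum_nonneg
      intro p hp
      have := Real.log_natCast_nonneg p
      have hppos : (0:ℝ) ≤ p := Nat.cast_nonneg p
      positivity
    have hgn : g n = 1 / Real.log n := rfl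
    rw [hgn, mul_one_div, div_le_iff₀ hlogn]
    have : Real.log 2 ≤ Real.log n := by
      apply Real.log_le_log (by norm_num); exact_mod_cast hn
    nlinarith
  have hswap : ∑ p ∈ (n+1).primesBelow, ∑ k ∈ Finset.Ico p n, (Real.log p / p) * (g k - g (k+1))
      = ∑ k ∈ Finset.Ico 2 n, (∑ p ∈ (k+1).primesBelow, Real.log p / p) * (g k - g (k+1)) := by
    have hIco : ∀ p ∈ (n+1).primesBelow,
        ∑ k ∈ Finset.Ico p n, (Real.log p / p) * (g k - g (k+1))
          = ∑ k ∈ Finset.Ico 2 n, if p ≤ k then (Real.log p / p) * (g k - g (k+1)) else 0 := by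
      intro p hp
      obtain ⟨hlt, hp'⟩ := Nat.mem_primesBelow.mp hp
      rw [Finset.sum_ite, Finset.sum_const_zero, add_zero]
      apply Finset.sum_congr _ (fun _ _ => rfl)
      ext k
      simp only [Finset.mem_filter, Finset.mem_Ico]
      constructor
      · intro ⟨h1, h2⟩; exact ⟨⟨hp'.two_le.trans h1, h2⟩, h1⟩
      · intro ⟨⟨h1, h2⟩, h3⟩; exact ⟨h3, h2⟩
    rw [Finset.sum_congr rfl hIco, Finset.sum_comm]
    apply Finset.sum_congr rfl
    intro k hk
    obtain ⟨hk2, hkn⟩ := Finset.mem_Ico.mp hk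
    have hPB : (n+1).primesBelow.filter (fun p => p ≤ k) = (k+1).primesBelow := by
      ext p
      simp only [Finset.mem_filter, Nat.mem_primesBelow]
      constructor
      · intro ⟨⟨h1, h2⟩, h3⟩; exact ⟨by omega, h2⟩
      · intro ⟨h1, h2⟩; exact ⟨⟨by omega, h2⟩, by omega⟩
    rw [← Finset.sum_filter, hPB, Finset.sum_mul]
  rw [hswap]
  have hbound : ∑ k ∈ Finset.Ico 2 n, (∑ p ∈ (k+1).primesBelow, Real.log p / p) * (g k - g (k+1))
      ≤ ∑ k ∈ Finset.Ico 2 n, ((LL (k+1) - LL k) + 2 * (g k - g (k+1))) := by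
    apply Finset.sum_le_sum
    intro k hk
    obtain ⟨hk2, hkn⟩ := Finset.mem_Ico.mp hk
    have hcast : ((k+1:ℕ):ℝ) = (k:ℝ)+1 := by push_cast; ring
    have hlk : (0:ℝ) < Real.log k := hglepos k hk2
    have hlk1 : Real.log k ≤ Real.log (k+1:ℕ) := by
      apply Real.log_le_log (by positivity); rw [hcast]; linarith
    have hlk1' : (0:ℝ) < Real.log (k+1:ℕ) := lt_of_lt_of_le hlk hlk1
    have hgnonneg : 0 ≤ g k - g (k+1) := by
      simp only [hg]
      rw [sub_nonneg]
      exact one_div_le_one_div_of_le hlk hlk1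
    have hA : (∑ p ∈ (k+1).primesBelow, Real.log p / p) ≤ Real.log k + 2 :=
      mertens_first (by omega)
    calc (∑ p ∈ (k+1).primesBelow, Real.log p / p) * (g k - g (k+1))
        ≤ (Real.log k + 2) * (g k - g (k+1)) := by
          apply mul_le_mul_of_nonneg_right hA hgnonneg
      _ = Real.log k * (g k - g (k+1)) + 2 * (g k - g (k+1)) := by ring
      _ ≤ (LL (k+1) - LL k) + 2 * (g k - g (k+1)) := by
          have hgk : Real.log k * (g k - g (k+1)) = 1 - Real.log k / Real.log (k+1:ℕ) := by
            simp only [hg]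
            field_simp
          rw [hgk]
          have := loglog_step hk2
          linarith
  have htel1 : ∑ k ∈ Finset.Ico 2 n, (LL (k+1) - LL k)
      = LL n - LL 2 := by
    have h := telescope_Ico (fun k => - LL k) (show 2 ≤ n by omega)
    have heq : ∀ k ∈ Finset.Ico 2 n, LL (k+1) - LL k
        = (fun k : ℕ => - LL k) k - (fun k : ℕ => - LL k) (k+1) := by
      intro k _; simp; ring
    rw [Finset.sum_congr rfl heq, h]
    simp
    ring
  have htel2 : ∑ k ∈ Finset.Ico 2 n, (g k - g (k+1)) = g 2 - g n :=
    telescope_Ico g (by omega)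
  have hsplit : ∑ k ∈ Finset.Ico 2 n, ((LL (k+1) - LL k) + 2 * (g k - g (k+1)))
      = (LL n - LL 2) + 2 * (g 2 - g n) := by
    rw [Finset.sum_add_distrib, htel1, ← Finset.mul_sum, htel2]
  have hll2 : LL 2 ≥ -0.45 := by
    have h1 : Real.log (1 / Real.log 2) ≤ 1 / Real.log 2 - 1 :=
      Real.log_le_sub_one_of_pos (by positivity)
    rw [Real.log_div (by norm_num) (by positivity), Real.log_one] at h1
    have h2 : 1 / Real.log 2 ≤ 1 / 0.6931 := by
      apply one_div_le_one_div_of_le (by norm_num) (le_of_lt hlog2)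
    have h3 : (1:ℝ) / 0.6931 - 1 ≤ 0.45 := by norm_num
    simp only [LL]
    norm_num
    linarith
  have hg2 : g 2 ≤ 1.5 := by
    simp only [hg]
    norm_num
    rw [inv_le_comm₀ (by positivity : (0:ℝ) < Real.log 2) (by norm_num : (0:ℝ) < 3/2)]
    linarith
  have hgnn : 0 ≤ g n := by
    simp only [hg]; positivity
  have hLLn : LL n = Real.log (Real.log n) := rfl
  linarith

lemma sum_inv_sq_le (t : ℕ) : ∑ k ∈ Finset.Icc 2 t, (1:ℝ)/(k^2) ≤ 1 := by
  have h1 : ∀ k ∈ Finset.Icc 2 t, (1:ℝ)/(k^2)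
      ≤ (fun k : ℕ => 1/((k:ℝ)-1)) k - (fun k : ℕ => 1/((k:ℝ)-1)) (k+1) := by
    intro k hk
    obtain ⟨hk2, hkt⟩ := Finset.mem_Icc.mp hk
    have hk2' : (2:ℝ) ≤ k := by exact_mod_cast hk2
    have h : (fun k : ℕ => 1/((k:ℝ)-1)) k - (fun k : ℕ => 1/((k:ℝ)-1)) (k+1)
        = 1/((k:ℝ)-1) - 1/k := by push_cast; ring_nf
    rw [h]
    have hpos : (0:ℝ) < (k:ℝ)-1 := by linarith
    have hk0 : (0:ℝ) < k := by linarith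
    have key : 1/((k:ℝ)-1) - 1/k = 1/(((k:ℝ)-1)*k) := by
      field_simp
      ring
    rw [key]
    apply one_div_le_one_div_of_le (by nlinarith) (by nlinarith : ((k:ℝ)-1)*k ≤ (k:ℝ)^2)
  calc ∑ k ∈ Finset.Icc 2 t, (1:ℝ)/(k^2)
      ≤ ∑ k ∈ Finset.Icc 2 t, ((fun k : ℕ => 1/((k:ℝ)-1)) k - (fun k : ℕ => 1/((k:ℝ)-1)) (k+1)) :=
        Finset.sum_le_sum h1
    _ ≤ 1 := by
        rcases Nat.eq_zero_or_pos t with rfl | ht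
        · simp
        rw [show Finset.Icc 2 t = Finset.Ico 2 (t+1) by rw [Finset.Ico_add_one_right_eq_Icc],
          telescope_Ico _ (by omega)]
        have ht' : (1:ℝ) ≤ t := by exact_mod_cast ht
        have h3 : ((t+1:ℕ):ℝ) - 1 = (t:ℝ) := by push_cast; ring
        rw [h3]
        have : (0:ℝ) ≤ 1/(t:ℝ) := by positivity
        push_cast
        linarith

/-- The reciprocal monoid hom. -/
noncomputable def invHom : ℕ →* ℝ where
  toFun := fun m => (m:ℝ)⁻¹
  map_one' := by norm_num
  map_mul' := fun m n => by push_cast; rw [mul_inv]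

lemma smooth_recip_sum_le {t : ℕ} (ht : 2 ≤ t) (N : ℕ) :
    ∑ m ∈ (Finset.Icc 1 N).filter (fun m => ∀ p ∈ m.primeFactors, p ≤ t), (1:ℝ)/m
      ≤ Real.exp 10 * Real.log t := by
  classical
  set SM := (Finset.Icc 1 N).filter (fun m => ∀ p ∈ m.primeFactors, p ≤ t) with hSM
  have hmem : ∀ m ∈ SM, m ∈ (t+1).smoothNumbers := by
    intro m hm
    obtain ⟨hm1, hsm⟩ := Finset.mem_filter.mp hm
    have hm0 : m ≠ 0 := by
      have := (Finset.mem_Icc.mp hm1).1; omega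
    rw [Nat.mem_smoothNumbers]
    refine ⟨hm0, fun p hp => ?_⟩
    have hp' : p ∈ m.primeFactors := by
      rw [Nat.mem_primeFactors]
      exact ⟨Nat.prime_of_mem_primeFactorsList hp, Nat.dvd_of_mem_primeFactorsList hp, hm0⟩
    have := hsm p hp'
    omega
  have hlt : ∀ {p : ℕ}, p.Prime → ‖invHom p‖ < 1 := by
    intro p hp
    have h2 : (2:ℝ) ≤ p := by exact_mod_cast hp.two_le
    have hrfl : (invHom p : ℝ) = (p:ℝ)⁻¹ := rfl
    rw [Real.norm_eq_abs, hrfl, abs_of_nonneg (by positivity)]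
    rw [inv_lt_one_iff₀]
    right; linarith
  obtain ⟨hsummable, hsum⟩ :=
    EulerProduct.summable_and_hasSum_smoothNumbers_prod_primesBelow_geometric (F := ℝ)
      (f := invHom) hlt (t+1)
  -- finite sum ≤ product
  have step1 : ∑ m ∈ SM, (1:ℝ)/m ≤ ∏ p ∈ (t+1).primesBelow, (1 - invHom p)⁻¹ := by
    set s' : Finset ↥((t+1).smoothNumbers) :=
      SM.attach.image (fun x => (⟨x.1, hmem x.1 x.2⟩ : ↥((t+1).smoothNumbers))) with hs'
    have hsumeq : ∑ y ∈ s', invHom (y:ℕ) = ∑ m ∈ SM, (1:ℝ)/m := by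
      rw [hs', Finset.sum_image]
      · rw [← Finset.sum_attach SM (fun m => (1:ℝ)/m)]
        apply Finset.sum_congr rfl
        intro x _
        rw [one_div]
        rfl
      · intro x _ y _ hxy
        have h2 : ((⟨(x:ℕ), hmem x.1 x.2⟩ : ↥((t+1).smoothNumbers)) : ℕ)
            = ((⟨(y:ℕ), hmem y.1 y.2⟩ : ↥((t+1).smoothNumbers)) : ℕ) := congrArg Subtype.val hxy
        simp only [] at h2
        exact Subtype.ext h2
    rw [← hsumeq]
    apply sum_le_hasSum s' _ hsum
    intro i _
    have : (invHom (i:ℕ) : ℝ) = ((i:ℕ):ℝ)⁻¹ := rfl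
    rw [this]
    positivity
  -- product ≤ exp of sum
  have step2 : ∏ p ∈ (t+1).primesBelow, (1 - invHom p)⁻¹
      ≤ Real.exp (∑ p ∈ (t+1).primesBelow, ((1:ℝ)/p + 2/(p^2))) := by
    rw [Real.exp_sum]
    apply Finset.prod_le_prod
    · intro p hp
      have hp' := Nat.prime_of_mem_primesBelow hp
      have h2 : (2:ℝ) ≤ p := by exact_mod_cast hp'.two_le
      have hrfl : (invHom p : ℝ) = (p:ℝ)⁻¹ := rfl
      rw [hrfl]
      have : (p:ℝ)⁻¹ ≤ 1/2 := by
        rw [inv_le_comm₀ (by linarith) (by norm_num)]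
        linarith
      have h1 : 0 < 1 - (p:ℝ)⁻¹ := by linarith
      positivity
    · intro p hp
      have hp' := Nat.prime_of_mem_primesBelow hp
      have h2 : (2:ℝ) ≤ p := by exact_mod_cast hp'.two_le
      have hp0 : (0:ℝ) < p := by linarith
      have hrfl : (invHom p : ℝ) = (p:ℝ)⁻¹ := rfl
      rw [hrfl]
      have hinv : (p:ℝ)⁻¹ ≤ 1/2 := by
        rw [inv_le_comm₀ (by linarith) (by norm_num)]
        linarith
      have h1 : 0 < 1 - (p:ℝ)⁻¹ := by linarith
      -- (1 - 1/p)⁻¹ ≤ exp(1/(p-1)) ≤ exp(1/p + 2/p²)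
      have hlog : Real.log ((1 - (p:ℝ)⁻¹)⁻¹) ≤ 1/((p:ℝ)-1) := by
        have hfrac : (1 - (p:ℝ)⁻¹)⁻¹ = p/((p:ℝ)-1) := by
          have hh : 1 - (p:ℝ)⁻¹ = ((p:ℝ)-1)/p := by
            field_simp
          rw [hh, inv_div]
        rw [hfrac]
        have := Real.log_le_sub_one_of_pos (div_pos hp0 (by linarith : (0:ℝ) < (p:ℝ)-1))
        have heq : (p:ℝ)/((p:ℝ)-1) - 1 = 1/((p:ℝ)-1) := by
          rw [sub_eq_iff_eq_add, div_add' _ _ _ (by linarith : (p:ℝ)-1 ≠ 0)]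
          ring_nf
        linarith
      have hmono : 1/((p:ℝ)-1) ≤ 1/(p:ℝ) + 2/(p:ℝ)^2 := by
        rw [div_add_div _ _ (by linarith) (by nlinarith), div_le_div_iff₀ (by linarith) (by nlinarith)]
        nlinarith
      calc (1 - (p:ℝ)⁻¹)⁻¹ = Real.exp (Real.log ((1 - (p:ℝ)⁻¹)⁻¹)) := by
            rw [Real.exp_log (by positivity)]
        _ ≤ Real.exp ((1:ℝ)/p + 2/(p^2)) := by
            apply Real.exp_le_exp.mpr
            linarith
  -- sum bound
  have step3 : ∑ p ∈ (t+1).primesBelow, ((1:ℝ)/p + 2/(p^2))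
      ≤ Real.log (Real.log t) + 10 := by
    rw [Finset.sum_add_distrib]
    have h1 : ∑ p ∈ (t+1).primesBelow, (1:ℝ)/p ≤ Real.log (Real.log t) + 8 :=
      mertens_second ht
    have h2 : ∑ p ∈ (t+1).primesBelow, (2:ℝ)/(p^2) ≤ 2 := by
      have hsub : (t+1).primesBelow ⊆ Finset.Icc 2 t := by
        intro p hp
        obtain ⟨hlt', hp'⟩ := Nat.mem_primesBelow.mp hp
        rw [Finset.mem_Icc]
        exact ⟨hp'.two_le, by omega⟩
      calc ∑ p ∈ (t+1).primesBelow, (2:ℝ)/(p^2)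
          ≤ ∑ k ∈ Finset.Icc 2 t, (2:ℝ)/(k^2) := by
            apply Finset.sum_le_sum_of_subset_of_nonneg hsub
            intro k _ _
            positivity
        _ = 2 * ∑ k ∈ Finset.Icc 2 t, (1:ℝ)/(k^2) := by
            rw [Finset.mul_sum]
            exact Finset.sum_congr rfl fun k _ => by ring
        _ ≤ 2 := by linarith [sum_inv_sq_le t]
    linarith
  have hlogt : (0:ℝ) < Real.log t := Real.log_pos (by exact_mod_cast ht)
  calc ∑ m ∈ SM, (1:ℝ)/m ≤ ∏ p ∈ (t+1).primesBelow, (1 - invHom p)⁻¹ := step1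
    _ ≤ Real.exp (∑ p ∈ (t+1).primesBelow, ((1:ℝ)/p + 2/(p^2))) := step2
    _ ≤ Real.exp (Real.log (Real.log t) + 10) := Real.exp_le_exp.mpr step3
    _ = Real.exp 10 * Real.log t := by
        rw [Real.exp_add, Real.exp_log hlogt]
        ring

lemma log_le_four_rpow {M : ℕ} (hM : 1 ≤ M) : Real.log M ≤ 4 * Real.sqrt (Real.sqrt M) := by
  have hM0 : (0:ℝ) < M := by exact_mod_cast hM
  have h1 : (0:ℝ) < Real.sqrt (Real.sqrt M) := by positivity
  have h2 : (Real.sqrt (Real.sqrt M))^4 = M := by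
    rw [show (4:ℕ) = 2*2 from rfl, pow_mul, Real.sq_sqrt (Real.sqrt_nonneg _),
      Real.sq_sqrt (le_of_lt hM0)]
  calc Real.log M = Real.log ((Real.sqrt (Real.sqrt M))^4) := by rw [h2]
    _ = 4 * Real.log (Real.sqrt (Real.sqrt M)) := by rw [Real.log_pow]; norm_num
    _ ≤ 4 * (Real.sqrt (Real.sqrt M) - 1) := by
        have := Real.log_le_sub_one_of_pos h1
        linarith
    _ ≤ 4 * Real.sqrt (Real.sqrt M) := by linarith

/-- Chebyshev-type bound for prime powers: `∑_{q ≤ M prime power} log q ≤ 100 M`. -/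
lemma psi_le (M : ℕ) : ∑ q ∈ (Finset.Icc 1 M).filter IsPrimePow, Real.log q ≤ 100 * M := by
  classical
  rcases Nat.eq_zero_or_pos M with rfl | hM
  · simp
  have hM0 : (0:ℝ) < M := by exact_mod_cast hM
  set PP := (Finset.Icc 1 M).filter IsPrimePow with hPP
  set K := Nat.log 2 M with hK
  set φ : ℕ → ℕ × ℕ := fun q => (q.minFac, q.factorization q.minFac) with hφ
  set B := ((M+1).primesBelow ×ˢ Finset.Icc 1 M).filter (fun pa => pa.1 ^ pa.2 ≤ M) with hB
  -- structure of prime powers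
  have hstruct : ∀ q ∈ PP, (q.minFac.Prime ∧ 1 ≤ q.factorization q.minFac ∧
      q.minFac ^ (q.factorization q.minFac) = q ∧ q ≤ M) := by
    intro q hq
    obtain ⟨hq1, hq2⟩ := Finset.mem_filter.mp hq
    obtain ⟨hq1', hqM⟩ := Finset.mem_Icc.mp hq1
    obtain ⟨p, k, hp, hk, hpk⟩ := hq2
    have hp' : p.Prime := hp.nat_prime
    have hmf : q.minFac = p := by rw [← hpk]; exact Nat.Prime.pow_minFac hp' (by omega)
    have hfac : q.factorization q.minFac = k := by
      rw [hmf, ← hpk, Nat.Prime.factorization_pow hp']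
      simp
    rw [hfac, hmf]
    exact ⟨hp', by omega, hpk, hqM⟩
  have hlog : ∀ q ∈ PP, Real.log q = ((φ q).2 : ℝ) * Real.log (φ q).1 := by
    intro q hq
    obtain ⟨hp, hk, hpk, _⟩ := hstruct q hq
    conv_lhs => rw [← hpk]
    push_cast [Real.log_pow]
    rfl
  have himg : ∀ q ∈ PP, φ q ∈ B := by
    intro q hq
    obtain ⟨hp, hk, hpk, hqM⟩ := hstruct q hq
    have hq1 : 1 ≤ q := by
      rcases Finset.mem_Icc.mp (Finset.mem_filter.mp hq).1 with ⟨h, _⟩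
      exact h
    have hφq : φ q = (q.minFac, q.factorization q.minFac) := rfl
    rw [hφq, hB, Finset.mem_filter, Finset.mem_product]
    have hmfle : q.minFac ≤ q := Nat.minFac_le (by omega)
    have h2a : q.factorization q.minFac < 2 ^ (q.factorization q.minFac) :=
      Nat.lt_two_pow_self
    have h2b : 2 ^ (q.factorization q.minFac) ≤ q.minFac ^ (q.factorization q.minFac) :=
      Nat.pow_le_pow_left hp.two_le _
    refine ⟨⟨Nat.mem_primesBelow.mpr ⟨by omega, hp⟩, Finset.mem_Icc.mpr ⟨hk, by omega⟩⟩, ?_⟩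
    dsimp only
    omega
  have hinj : ∀ x ∈ PP, ∀ y ∈ PP, φ x = φ y → x = y := by
    intro x hx y hy hxy
    obtain ⟨_, _, hx3, _⟩ := hstruct x hx
    obtain ⟨_, _, hy3, _⟩ := hstruct y hy
    rw [← hx3, ← hy3]
    rw [show x.minFac = (φ x).1 from rfl, show x.factorization x.minFac = (φ x).2 from rfl,
      show y.minFac = (φ y).1 from rfl, show y.factorization y.minFac = (φ y).2 from rfl, hxy]
  have hsum1 : ∑ q ∈ PP, Real.log q = ∑ y ∈ PP.image φ, ((y.2:ℝ) * Real.log y.1) := by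
    rw [Finset.sum_image hinj]
    exact Finset.sum_congr rfl hlog
  have hnonneg : ∀ y : ℕ × ℕ, 0 ≤ ((y.2:ℝ) * Real.log y.1) := by
    intro y
    have := Real.log_natCast_nonneg y.1
    positivity
  have hsum2 : ∑ y ∈ PP.image φ, ((y.2:ℝ) * Real.log y.1) ≤ ∑ y ∈ B, ((y.2:ℝ) * Real.log y.1) := by
    apply Finset.sum_le_sum_of_subset_of_nonneg
    · intro y hy
      obtain ⟨q, hq, rfl⟩ := Finset.mem_image.mp hy
      exact himg q hq
    · intro y _ _; exact hnonneg y
  -- split B by exponent = 1 or ≥ 2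
  have hsplit : ∑ y ∈ B, ((y.2:ℝ) * Real.log y.1)
      = ∑ y ∈ B.filter (fun y => y.2 = 1), ((y.2:ℝ) * Real.log y.1)
        + ∑ y ∈ B.filter (fun y => ¬ y.2 = 1), ((y.2:ℝ) * Real.log y.1) :=
    (Finset.sum_filter_add_sum_filter_not B _ _).symm
  have hpart1 : ∑ y ∈ B.filter (fun y => y.2 = 1), ((y.2:ℝ) * Real.log y.1)
      ≤ 1.4 * M := by
    have hsub : B.filter (fun y => y.2 = 1) ⊆ (M+1).primesBelow ×ˢ ({1} : Finset ℕ) := by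
      intro y hy
      obtain ⟨hyB, hy1⟩ := Finset.mem_filter.mp hy
      rw [hB, Finset.mem_filter, Finset.mem_product] at hyB
      rw [Finset.mem_product, Finset.mem_singleton]
      exact ⟨hyB.1.1, hy1⟩
    calc ∑ y ∈ B.filter (fun y => y.2 = 1), ((y.2:ℝ) * Real.log y.1)
        ≤ ∑ y ∈ (M+1).primesBelow ×ˢ ({1} : Finset ℕ), ((y.2:ℝ) * Real.log y.1) :=
          Finset.sum_le_sum_of_subset_of_nonneg hsub (fun y _ _ => hnonneg y)
      _ = ∑ p ∈ (M+1).primesBelow, Real.log p := by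
          rw [Finset.sum_product]
          apply Finset.sum_congr rfl
          intro p _
          simp
      _ ≤ M * Real.log 4 := theta_le M
      _ ≤ 1.4 * M := by
          have hlog4 : Real.log 4 ≤ 1.4 := by
            have h2 : Real.log 4 = 2 * Real.log 2 := by
              rw [show (4:ℝ) = 2^2 by norm_num, Real.log_pow]; norm_num
            nlinarith [Real.log_two_lt_d9]
          nlinarith
  have hpart2 : ∑ y ∈ B.filter (fun y => ¬ y.2 = 1), ((y.2:ℝ) * Real.log y.1)
      ≤ 98 * M := by
    have hsub : B.filter (fun y => ¬ y.2 = 1) ⊆ ((Nat.sqrt M)+1).primesBelow ×ˢ Finset.Icc 2 K := by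
      intro y hy
      obtain ⟨hyB, hy1⟩ := Finset.mem_filter.mp hy
      rw [hB, Finset.mem_filter, Finset.mem_product] at hyB
      obtain ⟨⟨hp, ha⟩, hpow⟩ := hyB
      obtain ⟨hlt', hp'⟩ := Nat.mem_primesBelow.mp hp
      obtain ⟨ha1, haM⟩ := Finset.mem_Icc.mp ha
      have ha2 : 2 ≤ y.2 := by omega
      rw [Finset.mem_product, Finset.mem_Icc]
      refine ⟨Nat.mem_primesBelow.mpr ⟨?_, hp'⟩, ha2, ?_⟩
      · -- y.1 ≤ sqrt M
        have h1 : y.1 * y.1 ≤ y.1 ^ y.2 := by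
          rw [← pow_two]
          exact Nat.pow_le_pow_right hp'.pos ha2
        have := Nat.le_sqrt.mpr (le_trans h1 hpow)
        omega
      · -- y.2 ≤ K
        have h1 : 2 ^ y.2 ≤ y.1 ^ y.2 := Nat.pow_le_pow_left hp'.two_le _
        rw [hK]
        rw [Nat.le_log_iff_pow_le (by norm_num) (by omega)]
        omega
    have hbound2 : ∑ y ∈ ((Nat.sqrt M)+1).primesBelow ×ˢ Finset.Icc 2 K,
        ((y.2:ℝ) * Real.log y.1) ≤ 98 * M := by
      rw [Finset.sum_product]
      have hinner : ∀ p : ℕ, ∑ a ∈ Finset.Icc 2 K, (((p,a).2 : ℝ) * Real.log (p,a).1)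
          = (∑ a ∈ Finset.Icc 2 K, (a:ℝ)) * Real.log p := by
        intro p
        rw [Finset.sum_mul]
      have hsum_a : (∑ a ∈ Finset.Icc 2 K, (a:ℝ)) ≤ (K:ℝ) * K := by
        calc (∑ a ∈ Finset.Icc 2 K, (a:ℝ)) ≤ ∑ a ∈ Finset.Icc 2 K, (K:ℝ) := by
              apply Finset.sum_le_sum
              intro a ha
              exact_mod_cast (Finset.mem_Icc.mp ha).2
          _ = (Finset.Icc 2 K).card * (K:ℝ) := by rw [Finset.sum_const, nsmul_eq_mul]
          _ ≤ (K:ℝ) * K := by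
              have : (Finset.Icc 2 K).card ≤ K := by
                rw [Nat.card_Icc]
                omega
              have hKnn : (0:ℝ) ≤ K := Nat.cast_nonneg K
              have : ((Finset.Icc 2 K).card : ℝ) ≤ K := by exact_mod_cast this
              nlinarith
      have hlog4 : Real.log 4 ≤ 1.4 := by
        have h2 : Real.log 4 = 2 * Real.log 2 := by
          rw [show (4:ℝ) = 2^2 by norm_num, Real.log_pow]; norm_num
        nlinarith [Real.log_two_lt_d9]
      have hsqrt_cast : ((Nat.sqrt M : ℕ):ℝ) ≤ Real.sqrt M := by
        have h3 : ((Nat.sqrt M : ℕ):ℝ)^2 ≤ (M:ℝ) := by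
          exact_mod_cast Nat.sqrt_le' M
        nlinarith [Real.sq_sqrt (le_of_lt hM0), Real.sqrt_nonneg (M:ℝ),
          (by positivity : (0:ℝ) ≤ ((Nat.sqrt M : ℕ):ℝ))]
      have hsum_p : ∑ p ∈ ((Nat.sqrt M)+1).primesBelow, Real.log p
          ≤ Real.sqrt M * 1.4 := by
        have h1 := theta_le (Nat.sqrt M)
        have hsnn : (0:ℝ) ≤ ((Nat.sqrt M:ℕ):ℝ) := Nat.cast_nonneg _
        nlinarith [Real.log_two_gt_d9, Real.log_nonneg (by norm_num : (1:ℝ) ≤ 4)]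
      have hKr : (K:ℝ) * Real.log 2 ≤ Real.log M := by
        have h1 : ((2:ℕ)^K : ℝ) ≤ (M:ℝ) := by
          exact_mod_cast Nat.pow_log_le_self 2 (by omega)
        calc (K:ℝ) * Real.log 2 = Real.log ((2:ℝ)^K) := by
              rw [Real.log_pow]
          _ ≤ Real.log M := by
              apply Real.log_le_log (by positivity)
              exact_mod_cast h1
      have hlogM : Real.log M ≤ 4 * Real.sqrt (Real.sqrt M) := log_le_four_rpow hM
      have hsq1 : Real.sqrt (Real.sqrt M) ^ 2 = Real.sqrt M :=
        Real.sq_sqrt (Real.sqrt_nonneg _)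
      have hsq2 : Real.sqrt M ^ 2 = (M:ℝ) := Real.sq_sqrt (le_of_lt hM0)
      have hlog2 : (0.6931:ℝ) < Real.log 2 := by
        have := Real.log_two_gt_d9; linarith
      have hKnn : (0:ℝ) ≤ (K:ℝ) := Nat.cast_nonneg K
      have hlogMnn : (0:ℝ) ≤ Real.log M := Real.log_natCast_nonneg M
      have hK2 : (K:ℝ)^2 * 0.48 ≤ 16 * Real.sqrt M := by
        have h4 : ((K:ℝ) * Real.log 2)^2 ≤ (Real.log M)^2 := by
          apply pow_le_pow_left₀ (by positivity) hKr
        have h5 : (Real.log M)^2 ≤ (4 * Real.sqrt (Real.sqrt M))^2 :=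
          pow_le_pow_left₀ hlogMnn hlogM 2
        have h6 : (4 * Real.sqrt (Real.sqrt M))^2 = 16 * Real.sqrt M := by
          rw [mul_pow, hsq1]; norm_num
        have h7 : (0.48:ℝ) ≤ (Real.log 2)^2 := by nlinarith
        have h8 : (K:ℝ)^2 * 0.48 ≤ (K:ℝ)^2 * (Real.log 2)^2 := by
          apply mul_le_mul_of_nonneg_left h7 (sq_nonneg _)
        have h9 : (K:ℝ)^2 * (Real.log 2)^2 = ((K:ℝ) * Real.log 2)^2 := by ring
        linarith
      have hAnn : (0:ℝ) ≤ ∑ a ∈ Finset.Icc 2 K, (a:ℝ) :=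
        Finset.sum_nonneg fun a _ => Nat.cast_nonneg a
      have hPnn : (0:ℝ) ≤ ∑ p ∈ ((Nat.sqrt M)+1).primesBelow, Real.log p :=
        Finset.sum_nonneg fun p _ => Real.log_natCast_nonneg p
      calc ∑ p ∈ ((Nat.sqrt M)+1).primesBelow, ∑ a ∈ Finset.Icc 2 K,
            (((p,a).2:ℝ) * Real.log (p,a).1)
          = ∑ p ∈ ((Nat.sqrt M)+1).primesBelow, (∑ a ∈ Finset.Icc 2 K, (a:ℝ)) * Real.log p := by
            apply Finset.sum_congr rfl
            intro p _
            rw [Finset.sum_mul]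
        _ = (∑ a ∈ Finset.Icc 2 K, (a:ℝ)) * ∑ p ∈ ((Nat.sqrt M)+1).primesBelow, Real.log p := by
            rw [Finset.mul_sum]
        _ ≤ ((K:ℝ) * K) * (Real.sqrt M * 1.4) := by
            apply mul_le_mul hsum_a hsum_p hPnn (by positivity)
        _ ≤ 98 * M := by
            have hss : Real.sqrt (M:ℝ) * Real.sqrt (M:ℝ) = (M:ℝ) :=
              Real.mul_self_sqrt (le_of_lt hM0)
            have h10 := mul_le_mul_of_nonneg_right hK2 (Real.sqrt_nonneg (M:ℝ))
            have h11 : (16*Real.sqrt (M:ℝ))*Real.sqrt (M:ℝ) = 16*(M:ℝ) := by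
              rw [mul_assoc, hss]
            rw [h11] at h10
            ring_nf at h10 ⊢
            linarith
    calc ∑ y ∈ B.filter (fun y => ¬ y.2 = 1), ((y.2:ℝ) * Real.log y.1)
        ≤ ∑ y ∈ ((Nat.sqrt M)+1).primesBelow ×ˢ Finset.Icc 2 K, ((y.2:ℝ) * Real.log y.1) :=
          Finset.sum_le_sum_of_subset_of_nonneg hsub (fun y _ _ => hnonneg y)
      _ ≤ 98 * M := hbound2
  calc ∑ q ∈ PP, Real.log q = ∑ y ∈ PP.image φ, ((y.2:ℝ) * Real.log y.1) := hsum1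
    _ ≤ ∑ y ∈ B, ((y.2:ℝ) * Real.log y.1) := hsum2
    _ = _ + _ := hsplit
    _ ≤ 1.4 * M + 98 * M := add_le_add hpart1 hpart2
    _ ≤ 100 * M := by linarith

lemma le_secondLargest {n p₁ p₂ : ℕ} (h1 : p₁ ∈ n.primeFactors)
    (h2 : p₂ ∈ n.primeFactors) (hlt : p₁ < p₂) :
    p₁ ≤ secondLargestPrimeFac n := by
  classical
  set l := n.primeFactors.sort (· ≤ ·) with hl
  have hs : l.Pairwise (· ≤ ·) := Finset.pairwise_sort _ _
  have hm1 : p₁ ∈ l := (Finset.mem_sort _).mpr h1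
  have hm2 : p₂ ∈ l := (Finset.mem_sort _).mpr h2
  obtain ⟨i, hi, hgi⟩ := List.mem_iff_getElem.mp hm1
  obtain ⟨j, hj, hgj⟩ := List.mem_iff_getElem.mp hm2
  have hij : i < j := by
    by_contra h
    push_neg at h
    have := hs.rel_get_of_le (a := ⟨j, hj⟩) (b := ⟨i, hi⟩) (by exact_mod_cast h)
    simp only [List.get_eq_getElem] at this
    rw [hgi, hgj] at this
    omega
  have hlen : 2 ≤ l.length := by omega
  have hkey : secondLargestPrimeFac n = l[l.length - 2]'(by omega) := by
    rw [secondLargestPrimeFac]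
    rw [List.getD_eq_getElem l.reverse 1 (by rw [List.length_reverse]; omega)]
    rw [List.getElem_reverse]
    congr 1
  rw [hkey]
  have hile : i ≤ l.length - 2 := by omega
  have := hs.rel_get_of_le (a := ⟨i, hi⟩) (b := ⟨l.length - 2, by omega⟩)
    (by exact_mod_cast hile)
  simp only [List.get_eq_getElem] at this
  rw [hgi] at this
  exact this

section decomp
variable (t : ℕ)

def mpart (n : ℕ) : ℕ := ∏ p ∈ n.primeFactors.filter (fun p => p ≤ t), p ^ n.factorization p

def qpart (n : ℕ) : ℕ := ∏ p ∈ n.primeFactors.filter (fun p => ¬ p ≤ t), p ^ n.factorization p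

lemma mq_mul {n : ℕ} (hn : n ≠ 0) : mpart t n * qpart t n = n := by
  have h := Nat.factorization_prod_pow_eq_self hn
  rw [Finsupp.prod, Nat.support_factorization] at h
  rw [mpart, qpart, Finset.prod_filter_mul_prod_filter_not]
  exact h

lemma mpart_pos (n : ℕ) : 0 < mpart t n := by
  apply Finset.prod_pos
  intro p hp
  have := (Nat.prime_of_mem_primeFactors (Finset.mem_filter.mp hp).1).pos
  positivity

lemma qpart_pos (n : ℕ) : 0 < qpart t n := by
  apply Finset.prod_pos
  intro p hp
  have := (Nat.prime_of_mem_primeFactors (Finset.mem_filter.mp hp).1).pos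
  positivity

lemma mpart_smooth {n : ℕ} : ∀ r ∈ (mpart t n).primeFactors, r ≤ t := by
  intro r hr
  obtain ⟨hrp, hrd, _⟩ := Nat.mem_primeFactors.mp hr
  rw [mpart] at hrd
  obtain ⟨p, hp, hdvd⟩ := (Prime.dvd_finset_prod_iff hrp.prime _).mp hrd
  obtain ⟨hpf, hple⟩ := Finset.mem_filter.mp hp
  have hpp := Nat.prime_of_mem_primeFactors hpf
  have : r = p := (Nat.prime_dvd_prime_iff_eq hrp hpp).mp (hrp.dvd_of_dvd_pow hdvd)
  omega

lemma qpart_one_or_pp {n : ℕ}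
    (hcard : (n.primeFactors.filter (fun p => ¬ p ≤ t)).card ≤ 1) :
    qpart t n = 1 ∨ IsPrimePow (qpart t n) := by
  rcases Nat.eq_zero_or_pos (n.primeFactors.filter (fun p => ¬ p ≤ t)).card with h0 | hpos
  · left
    rw [qpart, Finset.card_eq_zero.mp h0, Finset.prod_empty]
  · right
    have h1 : (n.primeFactors.filter (fun p => ¬ p ≤ t)).card = 1 := by omega
    obtain ⟨p, hp⟩ := Finset.card_eq_one.mp h1
    have hpmem : p ∈ n.primeFactors.filter (fun p => ¬ p ≤ t) := by
      rw [hp]; exact Finset.mem_singleton_self p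
    obtain ⟨hpf, _⟩ := Finset.mem_filter.mp hpmem
    have hpp := Nat.prime_of_mem_primeFactors hpf
    have hv : 0 < n.factorization p :=
      Nat.Prime.factorization_pos_of_dvd hpp (Nat.mem_primeFactors.mp hpf).2.2
        (Nat.mem_primeFactors.mp hpf).2.1
    rw [qpart, hp, Finset.prod_singleton]
    exact ⟨p, n.factorization p, hpp.prime, hv, rfl⟩

end decomp

lemma geom_tail {p : ℕ} (hp : 2 ≤ p) (N : ℕ) :
    ∑ a ∈ Finset.Icc 1 N, ((p:ℝ)⁻¹)^a ≤ 2/p := by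
  have hp0 : (0:ℝ) < p := by exact_mod_cast (by omega : 0 < p)
  have h1 : ∀ a ∈ Finset.Icc 1 N, ((p:ℝ)⁻¹)^a ≤ (p:ℝ)⁻¹ * (1/2)^(a-1) := by
    intro a ha
    obtain ⟨ha1, _⟩ := Finset.mem_Icc.mp ha
    have : ((p:ℝ)⁻¹)^a = (p:ℝ)⁻¹ * ((p:ℝ)⁻¹)^(a-1) := by
      conv_lhs => rw [show a = 1 + (a-1) by omega]
      rw [pow_add, pow_one]
    rw [this]
    apply mul_le_mul_of_nonneg_left _ (by positivity)
    apply pow_le_pow_left₀ (by positivity)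
    rw [inv_le_comm₀ hp0 (by norm_num)]
    · norm_num; exact_mod_cast hp
  calc ∑ a ∈ Finset.Icc 1 N, ((p:ℝ)⁻¹)^a
      ≤ ∑ a ∈ Finset.Icc 1 N, (p:ℝ)⁻¹ * (1/2)^(a-1) := Finset.sum_le_sum h1
    _ = (p:ℝ)⁻¹ * ∑ a ∈ Finset.Icc 1 N, ((1:ℝ)/2)^(a-1) := by rw [Finset.mul_sum]
    _ ≤ (p:ℝ)⁻¹ * 2 := by
        apply mul_le_mul_of_nonneg_left _ (by positivity)
        have : Finset.Icc 1 N = Finset.Ico 1 (N+1) := by rw [Finset.Ico_add_one_right_eq_Icc]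
        rw [this, Finset.sum_Ico_eq_sum_range]
        have h2 : ∀ k ∈ Finset.range (N+1-1), ((1:ℝ)/2)^(1+k-1) = ((1:ℝ)/2)^k := by
          intro k _
          congr 1
          omega
        rw [Finset.sum_congr rfl h2]
        exact sum_geometric_two_le _
    _ = 2/p := by rw [inv_mul_eq_div]
-- log of mpart vs factorization sums
lemma log_mpart_le {t n : ℕ} (hn : n ≠ 0) :
    Real.log (mpart t n) ≤ ∑ p ∈ (t+1).primesBelow, (n.factorization p : ℝ) * Real.log p := by
  have h1 : Real.log (mpart t n)
      = ∑ p ∈ n.primeFactors.filter (fun p => p ≤ t), (n.factorization p : ℝ) * Real.log p := by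
    rw [mpart, Nat.cast_prod, Real.log_prod]
    · apply Finset.sum_congr rfl
      intro p hp
      push_cast
      rw [Real.log_pow]
    · intro p hp
      have := (Nat.prime_of_mem_primeFactors (Finset.mem_filter.mp hp).1).pos
      positivity
  rw [h1]
  apply Finset.sum_le_sum_of_subset_of_nonneg
  · intro p hp
    obtain ⟨hpf, hple⟩ := Finset.mem_filter.mp hp
    have hpp := Nat.prime_of_mem_primeFactors hpf
    exact Nat.mem_primesBelow.mpr ⟨by omega, hpp⟩
  · intro p _ _
    have := Real.log_natCast_nonneg p
    positivity

lemma fact_count {N n p : ℕ} (hp : p.Prime) (hn : n ∈ Finset.Icc 1 N) :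
    (n.factorization p : ℝ) * Real.log p
      = ∑ a ∈ Finset.Icc 1 N, (if p^a ∣ n then Real.log p else 0) := by
  obtain ⟨hn1, hnN⟩ := Finset.mem_Icc.mp hn
  have hn0 : n ≠ 0 := by omega
  have hvN : n.factorization p ≤ N := by
    have := Nat.factorization_lt p hn0
    omega
  have hfil : (Finset.Icc 1 N).filter (fun a => p^a ∣ n) = Finset.Icc 1 (n.factorization p) := by
    ext a
    simp only [Finset.mem_filter, Finset.mem_Icc]
    constructor
    · intro ⟨⟨h1, h2⟩, h3⟩
      exact ⟨h1, (Nat.Prime.pow_dvd_iff_le_factorization hp hn0).mp h3⟩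
    · intro ⟨h1, h2⟩
      exact ⟨⟨h1, by omega⟩, (Nat.Prime.pow_dvd_iff_le_factorization hp hn0).mpr h2⟩
  rw [← Finset.sum_filter, hfil, Finset.sum_const, Nat.card_Icc]
  simp only [Nat.add_sub_cancel, nsmul_eq_mul]

lemma sum_log_Icc (N : ℕ) : ∑ n ∈ Finset.Icc 1 N, Real.log n = Real.log (Nat.factorial N) := by
  rw [← prod_range_add_one_eq_factorial]
  rw [Nat.cast_prod, Real.log_prod (fun x _ => by positivity)]
  rw [show Finset.Icc 1 N = Finset.Ico 1 (N+1) by rw [Finset.Ico_add_one_right_eq_Icc],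
    Finset.sum_Ico_eq_sum_range]
  simp only [Nat.add_sub_cancel]
  apply Finset.sum_congr rfl
  intro k _
  congr 1
  push_cast
  ring

lemma alpha_bound {N : ℕ} {x : ℝ} (hN : 1 ≤ N) (hNx : (N:ℝ) ≤ x) :
    ∑ n ∈ Finset.Icc 1 N, (Real.log x - Real.log n) ≤ x := by
  have hN0 : (0:ℝ) < N := by exact_mod_cast hN
  have hx0 : (0:ℝ) < x := lt_of_lt_of_le hN0 hNx
  rw [Finset.sum_sub_distrib, sum_log_Icc, Finset.sum_const, Nat.card_Icc]
  simp only [Nat.add_sub_cancel, nsmul_eq_mul]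
  have h1 := log_factorial_ge hN
  have h2 : Real.log x - Real.log N ≤ x/N - 1 := by
    rw [← Real.log_div (ne_of_gt hx0) (ne_of_gt hN0)]
    have := Real.log_le_sub_one_of_pos (show (0:ℝ) < x/N by positivity)
    linarith
  have h3 : (N:ℝ) * (Real.log x - Real.log N) ≤ x - N := by
    have := mul_le_mul_of_nonneg_left h2 (le_of_lt hN0)
    calc (N:ℝ) * (Real.log x - Real.log N) ≤ N * (x/N - 1) := this
      _ = x - N := by field_simp
  nlinarith

/-- There is `C > 0` such that uniformly for `2 ≤ T ≤ x`, the number of `n ≤ x`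
with `P₂(n) ≤ T` is at most `C x log T / log x`. -/
theorem count_small_second_largest_prime_factor :
    ∃ C > (0 : ℝ), ∀ x T : ℝ, 2 ≤ T → T ≤ x →
      (((Finset.Icc 1 ⌊x⌋₊).filter (fun n => (secondLargestPrimeFac n : ℝ) ≤ T)).card : ℝ)
        ≤ C * x * Real.log T / Real.log x := by
  classical
  refine ⟨100 * Real.exp 10 + 20, by positivity, ?_⟩
  intro x T hT hTx
  set N := ⌊x⌋₊ with hNdef
  set t := ⌊T⌋₊ with htdef
  have hx2 : (2:ℝ) ≤ x := le_trans hT hTx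
  have hN2 : 2 ≤ N := Nat.le_floor (by exact_mod_cast hx2)
  have ht2 : 2 ≤ t := Nat.le_floor (by exact_mod_cast hT)
  have hNx : (N:ℝ) ≤ x := Nat.floor_le (by linarith)
  have htT : (t:ℝ) ≤ T := Nat.floor_le (by linarith)
  have hlogx : 0 < Real.log x := Real.log_pos (by linarith)
  have hlogT : 0 < Real.log T := Real.log_pos (by linarith)
  have hlog2 : (0.6931:ℝ) < Real.log 2 := by have := Real.log_two_gt_d9; linarith
  have hlogtT : Real.log t ≤ Real.log T := by
    apply Real.log_le_log (by exact_mod_cast (by omega : 0 < t)) htT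
  have hlog2T : Real.log 2 ≤ Real.log T := by
    apply Real.log_le_log (by norm_num) hT
  set S := (Finset.Icc 1 N).filter (fun n => (secondLargestPrimeFac n : ℝ) ≤ T) with hS
  -- members of S have at most one prime factor > t
  have hbig : ∀ n ∈ S, (n.primeFactors.filter (fun p => ¬ p ≤ t)).card ≤ 1 := by
    intro n hn
    obtain ⟨hn1, hP2⟩ := Finset.mem_filter.mp hn
    have hsm : ∀ p q : ℕ, p ∈ n.primeFactors → q ∈ n.primeFactors → p < q → p ≤ t := by
      intro p q hp hq hlt
      have h1 := le_secondLargest hp hq hlt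
      have h2 : (p:ℝ) ≤ T := le_trans (by exact_mod_cast h1) hP2
      exact Nat.le_floor h2
    rw [Finset.card_le_one]
    intro p hp q hq
    obtain ⟨hpf, hpt⟩ := Finset.mem_filter.mp hp
    obtain ⟨hqf, hqt⟩ := Finset.mem_filter.mp hq
    by_contra hne
    rcases lt_or_gt_of_ne hne with h | h
    · exact hpt (hsm p q hpf hqf h)
    · exact hqt (hsm q p hqf hpf h)
  have hSn0 : ∀ n ∈ S, n ≠ 0 := by
    intro n hn
    have := (Finset.mem_Icc.mp (Finset.mem_filter.mp hn).1).1
    omega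
  -- pointwise log decomposition
  have hpt : ∀ n ∈ S, Real.log x
      = (Real.log x - Real.log n) + Real.log (mpart t n) + Real.log (qpart t n) := by
    intro n hn
    have hn0 := hSn0 n hn
    have hmq := mq_mul t hn0
    have h1 : Real.log n = Real.log (mpart t n) + Real.log (qpart t n) := by
      conv_lhs => rw [← hmq]
      push_cast
      rw [Real.log_mul (by exact_mod_cast (mpart_pos t n).ne') (by exact_mod_cast (qpart_pos t n).ne')]
    rw [h1]
    ring
  have hcardeq : (S.card : ℝ) * Real.log x
      = ∑ n ∈ S, (Real.log x - Real.log n)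
        + ∑ n ∈ S, Real.log (mpart t n) + ∑ n ∈ S, Real.log (qpart t n) := by
    have h0 : (S.card : ℝ) * Real.log x = ∑ _n ∈ S, Real.log x := by
      rw [Finset.sum_const, nsmul_eq_mul]
    rw [h0, Finset.sum_congr rfl hpt, Finset.sum_add_distrib, Finset.sum_add_distrib]
  -- alpha part
  have halpha : ∑ n ∈ S, (Real.log x - Real.log n) ≤ x := by
    calc ∑ n ∈ S, (Real.log x - Real.log n)
        ≤ ∑ n ∈ Finset.Icc 1 N, (Real.log x - Real.log n) := by
          apply Finset.sum_le_sum_of_subset_of_nonneg (Finset.filter_subset _ _)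
          intro n hn _
          obtain ⟨h1, h2⟩ := Finset.mem_Icc.mp hn
          have hn0 : (0:ℝ) < n := by exact_mod_cast h1
          have : Real.log n ≤ Real.log x := by
            apply Real.log_le_log hn0
            calc (n:ℝ) ≤ N := by exact_mod_cast h2
              _ ≤ x := hNx
          linarith
      _ ≤ x := alpha_bound (by omega) hNx
  -- beta1 part
  have hbeta1 : ∑ n ∈ S, Real.log (mpart t n) ≤ 2 * N * (Real.log t + 2) := by
    have step1 : ∑ n ∈ S, Real.log (mpart t n)
        ≤ ∑ n ∈ Finset.Icc 1 N, ∑ p ∈ (t+1).primesBelow,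
            (n.factorization p : ℝ) * Real.log p := by
      calc ∑ n ∈ S, Real.log (mpart t n)
          ≤ ∑ n ∈ S, ∑ p ∈ (t+1).primesBelow, (n.factorization p : ℝ) * Real.log p :=
            Finset.sum_le_sum fun n hn => log_mpart_le (hSn0 n hn)
        _ ≤ _ := by
            apply Finset.sum_le_sum_of_subset_of_nonneg (Finset.filter_subset _ _)
            intro n _ _
            apply Finset.sum_nonneg
            intro p _
            have := Real.log_natCast_nonneg p
            positivity
    have step2 : ∑ n ∈ Finset.Icc 1 N, ∑ p ∈ (t+1).primesBelow,
          (n.factorization p : ℝ) * Real.log p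
        = ∑ p ∈ (t+1).primesBelow, ∑ a ∈ Finset.Icc 1 N,
            (((N/p^a : ℕ):ℝ) * Real.log p) := by
      have h1 : ∀ n ∈ Finset.Icc 1 N, ∑ p ∈ (t+1).primesBelow,
            (n.factorization p : ℝ) * Real.log p
          = ∑ p ∈ (t+1).primesBelow, ∑ a ∈ Finset.Icc 1 N,
              (if p^a ∣ n then Real.log p else 0) := by
        intro n hn
        exact Finset.sum_congr rfl fun p hp =>
          fact_count (Nat.prime_of_mem_primesBelow hp) hn
      rw [Finset.sum_congr rfl h1, Finset.sum_comm]
      apply Finset.sum_congr rfl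
      intro p _
      rw [Finset.sum_comm]
      apply Finset.sum_congr rfl
      intro a _
      rw [← Finset.sum_filter]
      rw [Finset.sum_const, nsmul_eq_mul]
      congr 2
      rw [show Finset.Icc 1 N = Finset.Ioc 0 N from rfl]
      exact Nat.Ioc_filter_dvd_card_eq_div N (p^a)
    have step3 : ∑ p ∈ (t+1).primesBelow, ∑ a ∈ Finset.Icc 1 N,
          (((N/p^a : ℕ):ℝ) * Real.log p)
        ≤ ∑ p ∈ (t+1).primesBelow, 2 * N * (Real.log p / p) := by
      apply Finset.sum_le_sum
      intro p hp
      have hpp := Nat.prime_of_mem_primesBelow hp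
      have hp2 : (2:ℝ) ≤ p := by exact_mod_cast hpp.two_le
      have hlp : (0:ℝ) ≤ Real.log p := Real.log_natCast_nonneg p
      calc ∑ a ∈ Finset.Icc 1 N, (((N/p^a : ℕ):ℝ) * Real.log p)
          ≤ ∑ a ∈ Finset.Icc 1 N, ((N:ℝ) * ((p:ℝ)⁻¹)^a * Real.log p) := by
            apply Finset.sum_le_sum
            intro a _
            apply mul_le_mul_of_nonneg_right _ hlp
            calc ((N/p^a : ℕ):ℝ) ≤ (N:ℝ)/((p:ℝ)^a) := by
                  have := Nat.cast_div_le (α := ℝ) (m := N) (n := p^a)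
                  push_cast at this ⊢
                  exact this
              _ = (N:ℝ) * ((p:ℝ)⁻¹)^a := by
                  rw [inv_pow, div_eq_mul_inv]
        _ = (N:ℝ) * (∑ a ∈ Finset.Icc 1 N, ((p:ℝ)⁻¹)^a) * Real.log p := by
            rw [Finset.mul_sum, Finset.sum_mul]
        _ ≤ (N:ℝ) * (2/p) * Real.log p := by
            apply mul_le_mul_of_nonneg_right _ hlp
            apply mul_le_mul_of_nonneg_left (geom_tail hpp.two_le N) (by positivity)
        _ = 2 * N * (Real.log p / p) := by ring
    have step4 : ∑ p ∈ (t+1).primesBelow, 2 * (N:ℝ) * (Real.log p / p)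
        ≤ 2 * N * (Real.log t + 2) := by
      rw [← Finset.mul_sum]
      apply mul_le_mul_of_nonneg_left (mertens_first (by omega)) (by positivity)
    calc ∑ n ∈ S, Real.log (mpart t n) ≤ _ := step1
      _ = _ := step2
      _ ≤ _ := step3
      _ ≤ _ := step4
  -- beta2 part
  have hbeta2 : ∑ n ∈ S, Real.log (qpart t n) ≤ 100 * N * (Real.exp 10 * Real.log t) := by
    set SM := (Finset.Icc 1 N).filter (fun m => ∀ p ∈ m.primeFactors, p ≤ t) with hSM
    set B := SM.biUnion (fun m => ({m} : Finset ℕ) ×ˢ ((Finset.Icc 1 (N/m)).filter IsPrimePow))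
      with hB
    set S' := S.filter (fun n => qpart t n ≠ 1) with hS'
    have hredu : ∑ n ∈ S, Real.log (qpart t n) = ∑ n ∈ S', Real.log (qpart t n) := by
      rw [hS']
      rw [← Finset.sum_filter_add_sum_filter_not S (fun n => qpart t n ≠ 1)
        (fun n => Real.log (qpart t n))]
      have : ∑ n ∈ S.filter (fun n => ¬ qpart t n ≠ 1), Real.log (qpart t n) = 0 := by
        apply Finset.sum_eq_zero
        intro n hn
        have h1 : qpart t n = 1 := by
          have := (Finset.mem_filter.mp hn).2
          tauto
        rw [h1]
        simp
      rw [this, add_zero]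
    have hinj : ∀ a ∈ S', ∀ b ∈ S', (fun n => (mpart t n, qpart t n)) a
        = (fun n => (mpart t n, qpart t n)) b → a = b := by
      intro a ha b hb hab
      have ha0 := hSn0 a (Finset.mem_filter.mp ha).1
      have hb0 := hSn0 b (Finset.mem_filter.mp hb).1
      have h1 : mpart t a = mpart t b := congrArg Prod.fst hab
      have h2 : qpart t a = qpart t b := congrArg Prod.snd hab
      rw [← mq_mul t ha0, ← mq_mul t hb0, h1, h2]
    have himg : ∀ n ∈ S', (mpart t n, qpart t n) ∈ B := by
      intro n hn
      obtain ⟨hnS, hq1⟩ := Finset.mem_filter.mp hn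
      have hn0 := hSn0 n hnS
      have hnN : n ≤ N := (Finset.mem_Icc.mp (Finset.mem_filter.mp hnS).1).2
      have hmq := mq_mul t hn0
      have hmp := mpart_pos t n
      have hqp := qpart_pos t n
      rw [hB, Finset.mem_biUnion]
      have hmle : mpart t n ≤ n := Nat.le_of_dvd (by omega) ⟨qpart t n, hmq.symm⟩
      refine ⟨mpart t n, ?_, ?_⟩
      · rw [hSM, Finset.mem_filter, Finset.mem_Icc]
        refine ⟨⟨by omega, by omega⟩, mpart_smooth t⟩
      · rw [Finset.mem_product, Finset.mem_singleton, Finset.mem_filter, Finset.mem_Icc]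
        refine ⟨rfl, ⟨by omega, ?_⟩, ?_⟩
        · show qpart t n ≤ N / mpart t n
          rw [Nat.le_div_iff_mul_le hmp, mul_comm]
          omega
        · show IsPrimePow (qpart t n)
          rcases qpart_one_or_pp t (hbig n hnS) with h | h
          · exact absurd h hq1
          · exact h
    have hstep : ∑ n ∈ S', Real.log (qpart t n) ≤ ∑ y ∈ B, Real.log y.2 := by
      have h1 : ∑ n ∈ S', Real.log (qpart t n)
          = ∑ y ∈ S'.image (fun n => (mpart t n, qpart t n)), Real.log y.2 := by
        rw [Finset.sum_image hinj]
      rw [h1]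
      apply Finset.sum_le_sum_of_subset_of_nonneg
      · intro y hy
        obtain ⟨n, hn, rfl⟩ := Finset.mem_image.mp hy
        exact himg n hn
      · intro y _ _
        exact Real.log_natCast_nonneg y.2
    have hdisj : (↑SM : Set ℕ).PairwiseDisjoint
        (fun m => ({m} : Finset ℕ) ×ˢ ((Finset.Icc 1 (N/m)).filter IsPrimePow)) := by
      intro a _ b _ hab
      apply Finset.disjoint_left.mpr
      intro y hy1 hy2
      rw [Finset.mem_product, Finset.mem_singleton] at hy1 hy2
      exact hab (hy1.1 ▸ hy2.1.symm ▸ rfl)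
    have hBsum : ∑ y ∈ B, Real.log y.2
        = ∑ m ∈ SM, ∑ q ∈ (Finset.Icc 1 (N/m)).filter IsPrimePow, Real.log q := by
      rw [hB, Finset.sum_biUnion hdisj]
      apply Finset.sum_congr rfl
      intro m _
      rw [Finset.singleton_product, Finset.sum_map]
      rfl
    have hpsi : ∑ m ∈ SM, ∑ q ∈ (Finset.Icc 1 (N/m)).filter IsPrimePow, Real.log q
        ≤ ∑ m ∈ SM, 100 * ((N:ℝ) * (1/m)) := by
      apply Finset.sum_le_sum
      intro m hm
      obtain ⟨hm1, _⟩ := Finset.mem_filter.mp hm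
      obtain ⟨hm1', hmN⟩ := Finset.mem_Icc.mp hm1
      have hm0 : (0:ℝ) < m := by exact_mod_cast hm1'
      calc ∑ q ∈ (Finset.Icc 1 (N/m)).filter IsPrimePow, Real.log q
          ≤ 100 * ((N/m : ℕ):ℝ) := psi_le (N/m)
        _ ≤ 100 * ((N:ℝ) * (1/m)) := by
            have := Nat.cast_div_le (α := ℝ) (m := N) (n := m)
            rw [mul_one_div]
            apply mul_le_mul_of_nonneg_left this (by norm_num)
    have hrecip : ∑ m ∈ SM, 100 * ((N:ℝ) * (1/m))
        ≤ 100 * N * (Real.exp 10 * Real.log t) := by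
      have h1 : ∑ m ∈ SM, 100 * ((N:ℝ) * (1/m)) = 100 * (N:ℝ) * ∑ m ∈ SM, (1:ℝ)/m := by
        rw [Finset.mul_sum]
        apply Finset.sum_congr rfl
        intro m _
        ring
      rw [h1]
      apply mul_le_mul_of_nonneg_left (smooth_recip_sum_le ht2 N) (by positivity)
    calc ∑ n ∈ S, Real.log (qpart t n) = ∑ n ∈ S', Real.log (qpart t n) := hredu
      _ ≤ ∑ y ∈ B, Real.log y.2 := hstep
      _ = _ := hBsum
      _ ≤ _ := hpsi
      _ ≤ _ := hrecip
  -- final numeric assembly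
  have hfinal : (S.card : ℝ) * Real.log x ≤ (100 * Real.exp 10 + 20) * x * Real.log T := by
    rw [hcardeq]
    have hb1 : 2 * (N:ℝ) * (Real.log t + 2) ≤ 2 * x * (Real.log T + 2) := by
      have h1 : (0:ℝ) ≤ Real.log t + 2 := by
        have := Real.log_natCast_nonneg t; linarith
      have hx0 : (0:ℝ) ≤ x := by linarith
      have hN0 : (0:ℝ) ≤ N := Nat.cast_nonneg N
      nlinarith
    have hb2 : 100 * (N:ℝ) * (Real.exp 10 * Real.log t)
        ≤ 100 * x * (Real.exp 10 * Real.log T) := by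
      have he : (0:ℝ) < Real.exp 10 := Real.exp_pos 10
      have hlt0 : (0:ℝ) ≤ Real.log t := Real.log_natCast_nonneg t
      have hN0 : (0:ℝ) ≤ N := Nat.cast_nonneg N
      calc 100 * (N:ℝ) * (Real.exp 10 * Real.log t)
          ≤ 100 * x * (Real.exp 10 * Real.log t) := by
            apply mul_le_mul_of_nonneg_right (by linarith) (by positivity)
        _ ≤ 100 * x * (Real.exp 10 * Real.log T) := by
            apply mul_le_mul_of_nonneg_left
              (mul_le_mul_of_nonneg_left hlogtT he.le) (by linarith)
    have hx_le : x ≤ 1.5 * x * Real.log T := by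
      nlinarith [hlog2, hlog2T, hx2]
    have h4x : 4 * x ≤ 6 * x * Real.log T := by
      nlinarith [hlog2, hlog2T, hx2]
    have hexp_pos : (0:ℝ) < Real.exp 10 := Real.exp_pos 10
    have hxlogT : (0:ℝ) ≤ x * Real.log T := by positivity
    nlinarith [halpha, hbeta1, hbeta2, hb1, hb2]
  rw [le_div_iff₀ hlogx] at *
  calc (S.card : ℝ) * Real.log x ≤ (100 * Real.exp 10 + 20) * x * Real.log T := hfinal
    _ = _ := by ring
end
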